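/- arXiv:1408.6774 — 7 statements merged into one kernel-verified Lean document; each statement's English description precedes it below -/
import Mathlib

section
/- Let A ∈ [0,1]^{n×n}. A nonzero Łukasiewicz eigenvector of A associated with λ = 1 exists if and only if ρ(A) = 1; moreover, for λ = 1 every Łukasiewicz eigenvector is pure (its components automatically satisfy x_i ≥ 1 − λ = 0). -/
open Finset

/-- Max-plus matrix-vector product: `(A ⊗ x)_i = max_j (a_{ij} + x_j)`. -/
noncomputable def mpMulVec {ι κ : Type*} [Fintype κ] (A : ι → κ → ℝ) (x : κ → ℝ) (i : ι) : ℝ :=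
  ⨆ j, (A i j + x j)

/-- Max-plus matrix-matrix product: `(A ⊗ B)_{ik} = max_j (a_{ij} + b_{jk})`. -/
noncomputable def mpMul {ι κ τ : Type*} [Fintype κ] (A : ι → κ → ℝ) (B : κ → τ → ℝ)
    (i : ι) (k : τ) : ℝ :=
  ⨆ j, (A i j + B j k)

/-- `mpPow1 A s` is the `(s+1)`-st max-plus power of `A`, i.e. `A^{⊗(s+1)}`. -/
noncomputable def mpPow1 {ι : Type*} [Fintype ι] (A : ι → ι → ℝ) : ℕ → ι → ι → ℝ
  | 0 => A
  | (k + 1) => mpMul A (mpPow1 A k)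

/-- Weight of the walk `P 0 → P 1 → ⋯ → P len` in the complete weighted digraph `D(B)`. -/
noncomputable def walkWeight {ι : Type*} (B : ι → ι → ℝ) (len : ℕ) (P : Fin (len + 1) → ι) : ℝ :=
  ∑ t : Fin len, B (P t.castSucc) (P t.succ)
/-- The maximum cycle mean `ρ(A)`: the maximum over all cycles (closed walks of length
`1 ≤ k ≤ n`) of the average weight of the cycle. -/
noncomputable def maxCycleMean {ι : Type*} [Fintype ι] (A : ι → ι → ℝ) : ℝ :=
  sSup { r | ∃ k, 1 ≤ k ∧ k ≤ Fintype.card ι ∧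
    ∃ P : Fin (k + 1) → ι, P 0 = P (Fin.last k) ∧ r = walkWeight A k P / (k : ℝ) }

/-- Kleene star of `A` (meaningful when `ρ(A) ≤ 0`):
`A*_{ii} = max(0, max_{1 ≤ k ≤ n-1} (A^{⊗k})_{ii})` and
`A*_{ij} = max_{1 ≤ k ≤ n-1} (A^{⊗k})_{ij}` for `i ≠ j`. -/
noncomputable def kleeneStar {ι : Type*} [Fintype ι] [DecidableEq ι] (A : ι → ι → ℝ)
    (i j : ι) : ℝ :=
  if i = j then max 0 (⨆ m : Fin (Fintype.card ι - 1), mpPow1 A (m : ℕ) i i)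
  else ⨆ m : Fin (Fintype.card ι - 1), mpPow1 A (m : ℕ) i j

/-- Max-Łukasiewicz matrix-vector product: `(A ⊗_L x)_i = max_j max(0, a_{ij} + x_j - 1)`. -/
noncomputable def lukMulVec {ι κ : Type*} [Fintype κ] (A : ι → κ → ℝ) (x : κ → ℝ) (i : ι) : ℝ :=
  ⨆ j, max 0 (A i j + x j - 1)

/-- Max-Łukasiewicz scalar action: `(λ ⊗_L x)_i = max(0, λ + x_i - 1)`. -/
noncomputable def lukSMul {ι : Type*} (lam : ℝ) (x : ι → ℝ) (i : ι) : ℝ :=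
  max 0 (lam + x i - 1)

/-- Max-Łukasiewicz matrix-matrix product: `(A ⊗_L B)_{ik} = max_j max(0, a_{ij} + b_{jk} - 1)`. -/
noncomputable def lukMul {ι κ τ : Type*} [Fintype κ] (A : ι → κ → ℝ) (B : κ → τ → ℝ)
    (i : ι) (k : τ) : ℝ :=
  ⨆ j, max 0 (A i j + B j k - 1)

/-- `lukPow1 A s` is the `(s+1)`-st Łukasiewicz power of `A`, i.e. `A^{⊗_L (s+1)}`. -/
noncomputable def lukPow1 {ι : Type*} [Fintype ι] (A : ι → ι → ℝ) : ℕ → ι → ι → ℝ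
  | 0 => A
  | (t + 1) => lukMul A (lukPow1 A t)

/-- Max-plus matrix-vector product of a real matrix with a vector over `ℝ ∪ {-∞}` (`EReal`). -/
noncomputable def mpMulVecE {ι κ : Type*} [Fintype κ] (A : ι → κ → ℝ) (v : κ → EReal)
    (i : ι) : EReal :=
  ⨆ j, ((A i j : EReal) + v j)

/-- Node `i` of the weighted digraph `D(B)` is secure if every walk starting at `i` has
nonpositive weight. -/
def SecureNode {ι : Type*} (B : ι → ι → ℝ) (i : ι) : Prop :=
  ∀ (len : ℕ) (P : Fin (len + 1) → ι), P 0 = i → walkWeight B len P ≤ 0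

/-- The partition `(K, L)` of `{1,…,n}` is secure with respect to `D(B)` (with parameter `λ`):
if `L = ∅` this means `D(B)` is `λ`-secure (every walk has weight `≤ λ`); otherwise it means
that every walk starting in `L` whose all other nodes lie in `K` has nonpositive weight.
(If `L` is everything, the latter condition holds trivially, matching the convention.) -/
def SecurePartition {n : ℕ} (B : Fin n → Fin n → ℝ) (lam : ℝ) (K L : Finset (Fin n)) : Prop :=
  if L = ∅ then
    ∀ (len : ℕ) (P : Fin (len + 1) → Fin n), walkWeight B len P ≤ lam
  else
    ∀ (len : ℕ) (P : Fin (len + 1) → Fin n),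
      P 0 ∈ L → (∀ t : Fin (len + 1), t ≠ 0 → P t ∈ K) → walkWeight B len P ≤ 0

noncomputable def gseq {n : ℕ} (A : Fin n → Fin n → ℝ) (c : Fin n) : ℕ → Fin n → ℝ
  | 0 => fun j => if j = c then 0 else -2
  | (m+1) => fun j => max (if j = c then 0 else -2) (⨆ l, (A j l - 1 + gseq A c m l))

variable {n : ℕ} {A : Fin n → Fin n → ℝ} {c : Fin n}

lemma gseq_le_zero (hn : 0 < n) (hA : ∀ i j, A i j ∈ Set.Icc (0:ℝ) 1) :
    ∀ m j, gseq A c m j ≤ 0 := by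
  haveI : Nonempty (Fin n) := ⟨⟨0, hn⟩⟩
  intro m
  induction m with
  | zero => intro j; simp only [gseq]; split <;> norm_num
  | succ m ih =>
    intro j
    simp only [gseq]
    apply max_le
    · split <;> norm_num
    · exact ciSup_le fun l => by linarith [(hA j l).2, ih l]

lemma gseq_bdd (hn : 0 < n) (hA : ∀ i j, A i j ∈ Set.Icc (0:ℝ) 1) (j : Fin n) :
    BddAbove (Set.range fun m => gseq A c m j) := by
  refine ⟨0, ?_⟩
  rintro _ ⟨m, rfl⟩
  exact gseq_le_zero hn hA m j

noncomputable def uvec {n : ℕ} (A : Fin n → Fin n → ℝ) (c : Fin n) (j : Fin n) : ℝ :=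
  ⨆ m, gseq A c m j

lemma uvec_le_zero (hn : 0 < n) (hA : ∀ i j, A i j ∈ Set.Icc (0:ℝ) 1) (j : Fin n) :
    uvec A c j ≤ 0 :=
  ciSup_le fun m => gseq_le_zero hn hA m j

lemma gseq_le_uvec (hn : 0 < n) (hA : ∀ i j, A i j ∈ Set.Icc (0:ℝ) 1) (m : ℕ) (j : Fin n) :
    gseq A c m j ≤ uvec A c j :=
  le_ciSup (gseq_bdd hn hA j) m

lemma uvec_c (hn : 0 < n) (hA : ∀ i j, A i j ∈ Set.Icc (0:ℝ) 1) :
    uvec A c c = 0 := by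
  refine le_antisymm (uvec_le_zero hn hA c) ?_
  have h0 : gseq A c 0 c = 0 := by simp [gseq]
  rw [← h0]; exact gseq_le_uvec hn hA 0 c

lemma add_uvec_le (hn : 0 < n) (hA : ∀ i j, A i j ∈ Set.Icc (0:ℝ) 1) (j l : Fin n) :
    A j l - 1 + uvec A c l ≤ uvec A c j := by
  haveI : Nonempty (Fin n) := ⟨⟨0, hn⟩⟩
  have h1 : ∀ m, gseq A c m l ≤ uvec A c j - (A j l - 1) := by
    intro m
    have h2 : A j l - 1 + gseq A c m l ≤ gseq A c (m+1) j := by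
      simp only [gseq]
      exact le_trans
        (le_ciSup (Set.Finite.bddAbove (Set.finite_range fun l' => A j l' - 1 + gseq A c m l')) l)
        (le_max_right _ _)
    have h3 := gseq_le_uvec (c := c) hn hA (m+1) j
    linarith
  have h4 : uvec A c l ≤ uvec A c j - (A j l - 1) := ciSup_le h1
  linarith

lemma uvec_le_F (hn : 0 < n) (hA : ∀ i j, A i j ∈ Set.Icc (0:ℝ) 1) {i : Fin n} (h : i ≠ c) :
    uvec A c i ≤ max (-2) (⨆ l, (A i l - 1 + uvec A c l)) := by
  haveI : Nonempty (Fin n) := ⟨⟨0, hn⟩⟩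
  refine ciSup_le fun m => ?_
  match m with
  | 0 => simp only [gseq, if_neg h]; exact le_max_left _ _
  | (m+1) =>
    simp only [gseq, if_neg h]
    apply max_le (le_max_left _ _)
    refine le_trans (ciSup_le fun l => ?_) (le_max_right _ _)
    have h1 := gseq_le_uvec (c := c) hn hA m l
    refine le_trans ?_ (le_ciSup (Set.Finite.bddAbove (Set.finite_range _)) l)
    linarith

lemma construct_eigen (hn : 0 < n) (hA : ∀ i j, A i j ∈ Set.Icc (0:ℝ) 1)
    {k : ℕ} (hk : 0 < k) (P : Fin (k+1) → Fin n) (hP : P 0 = P (Fin.last k))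
    (harc : ∀ t : Fin k, A (P t.castSucc) (P t.succ) = 1) :
    ∃ x : Fin n → ℝ, (∀ i, x i ∈ Set.Icc (0:ℝ) 1) ∧ x ≠ 0 ∧
      ∀ i, lukMulVec A x i = x i := by
  haveI : Nonempty (Fin n) := ⟨⟨0, hn⟩⟩
  obtain ⟨c, hc⟩ : ∃ c, P 0 = c := ⟨P 0, rfl⟩
  -- nodes of cycle have u ≥ 0
  have hPu : ∀ t : Fin (k+1), 0 ≤ uvec A c (P t) := by
    intro t
    induction t using Fin.reverseInduction with
    | last =>
      rw [← hP, hc, uvec_c hn hA]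
    | cast i ih =>
      have h3 := add_uvec_le (c := c) hn hA (P i.castSucc) (P i.succ)
      rw [harc i] at h3
      linarith
  -- inner sup at c equals 0
  have hsupc : (⨆ l, (A c l - 1 + uvec A c l)) = 0 := by
    refine le_antisymm
      (ciSup_le fun l => by linarith [(hA c l).2, uvec_le_zero (c := c) hn hA l]) ?_
    have t0 : Fin k := ⟨0, hk⟩
    have harc' := harc ⟨0, hk⟩
    have hcast : (⟨0, hk⟩ : Fin k).castSucc = (0 : Fin (k+1)) := rfl
    rw [hcast, hc] at harc'
    have h3 := hPu (⟨0, hk⟩ : Fin k).succ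
    have h4 : (0:ℝ) ≤ A c (P (⟨0, hk⟩ : Fin k).succ) - 1 + uvec A c (P (⟨0, hk⟩ : Fin k).succ) := by
      rw [harc']; linarith
    exact le_trans h4 (le_ciSup (f := fun l => A c l - 1 + uvec A c l)
      (Set.Finite.bddAbove (Set.finite_range _)) _)
  refine ⟨fun j => max 0 (1 + uvec A c j), ?_, ?_, ?_⟩
  · intro i
    exact ⟨le_max_left _ _,
      max_le (by norm_num) (by linarith [uvec_le_zero (c := c) (A := A) hn hA i])⟩
  · intro h
    have h1 := congrFun h c
    rw [uvec_c hn hA] at h1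
    norm_num at h1
  intro i
  beta_reduce
  have hxc : max 0 (1 + uvec A c c) = 1 := by rw [uvec_c hn hA]; norm_num
  -- pointwise identity
  have hpt : ∀ j, max 0 (A i j + (max 0 (1 + uvec A c j)) - 1)
      = max 0 (1 + (A i j - 1 + uvec A c j)) := by
    intro j
    rcases le_or_gt 0 (1 + uvec A c j) with h | h
    · have hxj : (0:ℝ) ⊔ (1 + uvec A c j) = 1 + uvec A c j := max_eq_right h
      rw [hxj]; ring_nf
    · have hxj : (0:ℝ) ⊔ (1 + uvec A c j) = 0 := max_eq_left h.le
      rw [hxj]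
      have e1 : max 0 (A i j + 0 - 1) = (0:ℝ) := max_eq_left (by linarith [(hA i j).2])
      have e2 : max 0 (1 + (A i j - 1 + uvec A c j)) = (0:ℝ) :=
        max_eq_left (by linarith [(hA i j).2])
      rw [e1, e2]
  have hlv : lukMulVec A (fun j => max 0 (1 + uvec A c j)) i
      = ⨆ j, max 0 (1 + (A i j - 1 + uvec A c j)) := by
    unfold lukMulVec
    exact iSup_congr hpt
  obtain ⟨j0, hj0⟩ := Finite.exists_max (fun j => A i j - 1 + uvec A c j)
  have hsup1 : (⨆ j, (A i j - 1 + uvec A c j)) = A i j0 - 1 + uvec A c j0 :=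
    le_antisymm (ciSup_le hj0) (le_ciSup (f := fun j => A i j - 1 + uvec A c j)
      (Set.Finite.bddAbove (Set.finite_range _)) j0)
  have hsup2 : (⨆ j, max 0 (1 + (A i j - 1 + uvec A c j)))
      = max 0 (1 + (A i j0 - 1 + uvec A c j0)) := by
    refine le_antisymm (ciSup_le fun l => ?_)
      (le_ciSup (f := fun j => max 0 (1 + (A i j - 1 + uvec A c j)))
        (Set.Finite.bddAbove (Set.finite_range _)) j0)
    exact max_le_max le_rfl (by linarith [hj0 l])
  rw [hlv, hsup2, ← hsup1]
  by_cases hic : i = c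
  · subst hic
    rw [hsupc, hxc]; norm_num
  · have h1 : (⨆ l, (A i l - 1 + uvec A c l)) ≤ uvec A c i :=
      ciSup_le fun l => add_uvec_le hn hA i l
    have h2 := uvec_le_F (c := c) hn hA hic
    rcases le_or_gt (1 + uvec A c i) 0 with h | h
    · have e1 : (0:ℝ) ⊔ (1 + uvec A c i) = 0 := max_eq_left h
      have e2 : (0:ℝ) ⊔ (1 + ⨆ l, (A i l - 1 + uvec A c l)) = 0 := max_eq_left (by linarith)
      rw [e1, e2]
    · have h3 : uvec A c i ≤ (⨆ l, (A i l - 1 + uvec A c l)) := by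
        rcases le_max_iff.mp h2 with h4 | h4
        · linarith
        · exact h4
      rw [le_antisymm h1 h3]




def cycSet {n : ℕ} (A : Fin n → Fin n → ℝ) : Set ℝ :=
  { r | ∃ k, 1 ≤ k ∧ k ≤ Fintype.card (Fin n) ∧
    ∃ P : Fin (k + 1) → Fin n, P 0 = P (Fin.last k) ∧ r = walkWeight A k P / (k : ℝ) }

lemma walkWeight_le (hA : ∀ i j, A i j ∈ Set.Icc (0:ℝ) 1) (k : ℕ) (P : Fin (k+1) → Fin n) :
    walkWeight A k P ≤ k := by
  calc walkWeight A k P ≤ ∑ _t : Fin k, (1:ℝ) :=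
        Finset.sum_le_sum fun t _ => (hA _ _).2
    _ = k := by simp

lemma cycSet_le_one (hA : ∀ i j, A i j ∈ Set.Icc (0:ℝ) 1) :
    ∀ r ∈ cycSet A, r ≤ 1 := by
  rintro r ⟨k, hk1, _, P, _, rfl⟩
  rw [div_le_one (by positivity)]
  simpa using walkWeight_le hA k P

lemma cycSet_nonempty (hn : 0 < n) (A : Fin n → Fin n → ℝ) : (cycSet A).Nonempty := by
  refine ⟨walkWeight A 1 (fun _ => ⟨0, hn⟩) / 1, 1, le_rfl, by rw [Fintype.card_fin]; exact hn,
    fun _ => ⟨0, hn⟩, rfl, by norm_num⟩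

lemma cycSet_finite (A : Fin n → Fin n → ℝ) : (cycSet A).Finite := by
  have hsub : cycSet A ⊆ ⋃ k ∈ Set.Icc 1 (Fintype.card (Fin n)),
      (fun P : Fin (k+1) → Fin n => walkWeight A k P / (k:ℝ)) '' Set.univ := by
    rintro r ⟨k, hk1, hk2, P, hP, rfl⟩
    simp only [Set.mem_iUnion, Set.image_univ, Set.mem_range]
    exact ⟨k, ⟨hk1, hk2⟩, P, rfl⟩
  exact Set.Finite.subset
    ((Set.finite_Icc 1 (Fintype.card (Fin n))).biUnion
      (fun k _ => Set.finite_univ.image _)) hsub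

lemma cycSet_bddAbove (hA : ∀ i j, A i j ∈ Set.Icc (0:ℝ) 1) : BddAbove (cycSet A) :=
  ⟨1, cycSet_le_one hA⟩

lemma one_mem_of_eigen (hn : 0 < n) (hA : ∀ i j, A i j ∈ Set.Icc (0:ℝ) 1)
    (x : Fin n → ℝ) (hx01 : ∀ i, x i ∈ Set.Icc (0:ℝ) 1) (hxne : x ≠ 0)
    (heq : ∀ i, lukMulVec A x i = x i) : (1:ℝ) ∈ cycSet A := by
  haveI : Nonempty (Fin n) := ⟨⟨0, hn⟩⟩
  -- a positive coordinate
  obtain ⟨i0, hi0⟩ : ∃ i, x i ≠ 0 := Function.ne_iff.mp hxne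
  have hi0' : 0 < x i0 := lt_of_le_of_ne (hx01 i0).1 (Ne.symm hi0)
  -- successor map
  have key : ∀ i : {i : Fin n // 0 < x i}, ∃ j : {j : Fin n // 0 < x j},
      A i.1 j.1 + x j.1 - 1 = x i.1 := by
    rintro ⟨i, hi⟩
    obtain ⟨j0, hj0⟩ := Finite.exists_max (fun j => max 0 (A i j + x j - 1))
    have h2 : lukMulVec A x i = max 0 (A i j0 + x j0 - 1) :=
      le_antisymm (ciSup_le hj0) (le_ciSup (f := fun j => max 0 (A i j + x j - 1))
        (Set.Finite.bddAbove (Set.finite_range _)) j0)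
    rw [heq i] at h2
    rcases le_or_gt (A i j0 + x j0 - 1) 0 with h | h
    · rw [max_eq_left h] at h2; exact absurd h2 hi.ne'
    · rw [max_eq_right h.le] at h2
      have hj0pos : 0 < x j0 := by
        have := (hA i j0).2
        linarith
      exact ⟨⟨j0, hj0pos⟩, h2.symm⟩
  choose nxt hnxt using key
  set Q : ℕ → {i : Fin n // 0 < x i} := fun m => nxt^[m] ⟨i0, hi0'⟩ with hQdef
  have hQ : ∀ m, A (Q m).1 (Q (m+1)).1 + x (Q (m+1)).1 - 1 = x (Q m).1 := by
    intro m
    have hstep : Q (m+1) = nxt (Q m) := Function.iterate_succ_apply' nxt m _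
    rw [hstep]
    exact hnxt (Q m)
  -- pigeonhole
  obtain ⟨s, t, hst, hst2⟩ := Fintype.exists_ne_map_eq_of_card_lt
    (fun s : Fin (n+1) => (Q s.1).1) (by simp)
  have claim : ∀ a b : ℕ, a < b → b ≤ n → (Q a).1 = (Q b).1 → (1:ℝ) ∈ cycSet A := by
    intro a b hab hbn habQ
    set k := b - a with hkdef
    have hk : 0 < k := by omega
    set P : Fin (k+1) → Fin n := fun u => (Q (a + u.1)).1 with hPdef
    have hP : P 0 = P (Fin.last k) := by
      simp only [hPdef, Fin.val_zero, Fin.val_last, Nat.add_zero]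
      have : a + k = b := by omega
      rw [this, habQ]
    have hww : walkWeight A k P = k := by
      have hterm : ∀ t : Fin k, A (P t.castSucc) (P t.succ)
          = 1 + (x (Q (a + t.1)).1 - x (Q (a + t.1 + 1)).1) := by
        intro t
        have h1 : P t.castSucc = (Q (a + t.1)).1 := rfl
        have h2 : P t.succ = (Q (a + t.1 + 1)).1 := rfl
        rw [h1, h2]
        have := hQ (a + t.1)
        linarith
      rw [walkWeight, Finset.sum_congr rfl (fun t _ => hterm t)]
      rw [Finset.sum_add_distrib]
      have htel : ∑ t : Fin k, (x (Q (a + t.1)).1 - x (Q (a + t.1 + 1)).1) = 0 := by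
        have := Fin.sum_univ_eq_sum_range
          (fun m => x (Q (a + m)).1 - x (Q (a + m + 1)).1) k
        rw [this]
        have h5 : ∑ i ∈ Finset.range k, (x (Q (a + i)).1 - x (Q (a + i + 1)).1)
            = ∑ i ∈ Finset.range k, (x (Q (a + i)).1 - x (Q (a + (i + 1))).1) :=
          Finset.sum_congr rfl fun i _ => by rw [Nat.add_assoc]
        rw [h5, Finset.sum_range_sub' (fun m => x (Q (a + m)).1) k]
        have : a + k = b := by omega
        rw [this, Nat.add_zero, habQ, sub_self]
      rw [htel]
      simp
    refine ⟨k, hk, by simpa using by omega, P, hP, ?_⟩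
    rw [hww, div_self (by positivity)]
  rcases hst.lt_or_gt with h | h
  · exact claim s.1 t.1 h (by omega) hst2
  · exact claim t.1 s.1 h (by omega) hst2.symm

lemma mcm_eq_sSup (A : Fin n → Fin n → ℝ) : maxCycleMean A = sSup (cycSet A) := rfl

lemma exists_cycle_of_mcm (hn : 0 < n) (hA : ∀ i j, A i j ∈ Set.Icc (0:ℝ) 1)
    (h : maxCycleMean A = 1) :
    ∃ k, 0 < k ∧ ∃ P : Fin (k+1) → Fin n, P 0 = P (Fin.last k) ∧
      ∀ t : Fin k, A (P t.castSucc) (P t.succ) = 1 := by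
  have h1 : (1:ℝ) ∈ cycSet A := by
    rw [mcm_eq_sSup] at h
    rw [← h]
    exact Set.Nonempty.csSup_mem (cycSet_nonempty hn A) (cycSet_finite A)
  obtain ⟨k, hk1, hk2, P, hP, hr⟩ := h1
  have hkpos : 0 < k := hk1
  have hkR : (0:ℝ) < (k:ℝ) := by exact_mod_cast hkpos
  have hW : walkWeight A k P = k := by
    rw [eq_div_iff hkR.ne'] at hr
    linarith
  have hsum0 : ∑ t : Fin k, ((1:ℝ) - A (P t.castSucc) (P t.succ)) = 0 := by
    rw [Finset.sum_sub_distrib]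
    have hone : ∑ _t : Fin k, (1:ℝ) = k := by simp
    have hw2 : ∑ t : Fin k, A (P t.castSucc) (P t.succ) = (k:ℝ) := hW
    rw [hone, hw2, sub_self]
  have harc : ∀ t : Fin k, A (P t.castSucc) (P t.succ) = 1 := by
    intro t
    have h2 := (Finset.sum_eq_zero_iff_of_nonneg
      (fun t _ => by linarith [(hA (P t.castSucc) (P t.succ)).2])).mp hsum0 t (Finset.mem_univ t)
    linarith
  exact ⟨k, hkpos, P, hP, harc⟩

/-- a nonzero Łukasiewicz eigenvector associated with `λ = 1` exists iff
`ρ(A) = 1`; moreover every Łukasiewicz eigenvector for `λ = 1` is pure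
(all its components are `≥ 1 - 1 = 0`). -/
theorem stmt10 {n : ℕ} (hn : 0 < n) (A : Fin n → Fin n → ℝ)
    (hA : ∀ i j, A i j ∈ Set.Icc (0 : ℝ) 1) :
    ((∃ x : Fin n → ℝ, (∀ i, x i ∈ Set.Icc (0 : ℝ) 1) ∧ x ≠ 0 ∧
        ∀ i, lukMulVec A x i = lukSMul 1 x i) ↔ maxCycleMean A = 1) ∧
      ∀ x : Fin n → ℝ, (∀ i, x i ∈ Set.Icc (0 : ℝ) 1) →
        (∀ i, lukMulVec A x i = lukSMul 1 x i) → ∀ i, 1 - 1 ≤ x i := by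
  constructor
  · constructor
    · rintro ⟨x, hx01, hxne, heq⟩
      have heq' : ∀ i, lukMulVec A x i = x i := by
        intro i
        rw [heq i]
        unfold lukSMul
        have h0 : (1:ℝ) + x i - 1 = x i := by ring
        rw [h0]
        exact max_eq_right (hx01 i).1
      have h1 := one_mem_of_eigen hn hA x hx01 hxne heq'
      rw [mcm_eq_sSup]
      exact le_antisymm (csSup_le (cycSet_nonempty hn A) (cycSet_le_one hA))
        (le_csSup (cycSet_bddAbove hA) h1)
    · intro h
      obtain ⟨k, hk, P, hP, harc⟩ := exists_cycle_of_mcm hn hA h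
      obtain ⟨x, h1, h2, h3⟩ := construct_eigen hn hA hk P hP harc
      refine ⟨x, h1, h2, fun i => ?_⟩
      rw [h3 i]
      unfold lukSMul
      have h0 : (1:ℝ) + x i - 1 = x i := by ring
      rw [h0]
      exact (max_eq_right ((h1 i).1)).symm
  · intro x hx _ i
    linarith [(hx i).1]
end

section
/- Let A ∈ [0,1]^{n×n}, 0 < λ < 1, and let (K,L) be a partition of {1,…,n} into nonempty proper subsets. Then A has a (K,L)-Łukasiewicz eigenvector associated with λ if and only if ρ(A_{KK}) ≤ λ and A^(λ)_{LK} ⊗ (A^(λ)_{KK})* ⊗ 𝟘_K ≤ 𝟘_L, i.e., for every ℓ ∈ L, max_{k,k' ∈ K} (a_{ℓk} − λ + ((A^(λ)_{KK})*)_{kk'}) ≤ 0. -/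
open Finset

set_option linter.unusedSectionVars false

namespace Stmt11Aux

variable {ι : Type*} [Fintype ι]

lemma le_fsup (f : ι → ℝ) (i : ι) : f i ≤ ⨆ j, f j :=
  le_ciSup (Set.Finite.bddAbove (Set.finite_range f)) i

lemma fsup_le [Nonempty ι] {f : ι → ℝ} {a : ℝ} (h : ∀ i, f i ≤ a) : (⨆ i, f i) ≤ a :=
  ciSup_le h

lemma exists_fsup [Nonempty ι] (f : ι → ℝ) : ∃ i, (⨆ j, f j) = f i := by
  obtain ⟨i, hi⟩ := Finite.exists_max f
  exact ⟨i, le_antisymm (fsup_le hi) (le_fsup f i)⟩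

/-- ℕ-indexed walk weight. -/
noncomputable def nW (B : ι → ι → ℝ) (P : ℕ → ι) (len : ℕ) : ℝ :=
  ∑ t ∈ Finset.range len, B (P t) (P (t + 1))

lemma nW_add (B : ι → ι → ℝ) (P : ℕ → ι) (a b : ℕ) :
    nW B P (a + b) = nW B P a + nW B (fun t => P (a + t)) b := by
  unfold nW
  rw [Finset.sum_range_add]
  rfl

lemma nW_toFin (B : ι → ι → ℝ) (Q : ℕ → ι) (len : ℕ) :
    nW B Q len = walkWeight B len (fun t => Q t.val) := by
  unfold walkWeight nW
  rw [← Fin.sum_univ_eq_sum_range (fun t => B (Q t) (Q (t + 1))) len]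
  exact Finset.sum_congr rfl fun t _ => by simp

lemma walkWeight_eq_nW (B : ι → ι → ℝ) (len : ℕ) (P : Fin (len + 1) → ι) :
    walkWeight B len P = nW B (fun t => P ⟨min t len, by omega⟩) len := by
  rw [nW_toFin]
  congr 1
  funext t
  congr 1
  exact Fin.ext (by simp [Nat.min_eq_left (Nat.lt_succ_iff.mp t.isLt)])

lemma nW_splice (B : ι → ι → ℝ) (P : ℕ → ι) {len t1 t2 : ℕ} (h1 : t1 < t2) (h2 : t2 ≤ len)
    (heq : P t1 = P t2) :
    nW B P len = nW B (fun t => if t < t1 then P t else P (t + (t2 - t1))) (len - (t2 - t1))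
      + nW B (fun t => P (t1 + t)) (t2 - t1) := by
  set d := t2 - t1 with hd
  set R : ℕ → ι := fun t => if t < t1 then P t else P (t + d) with hR
  have e1 : len = t1 + (d + (len - t2)) := by omega
  have e2 : len - d = t1 + (len - t2) := by omega
  have hsplit : nW B P len
      = nW B P t1 + (nW B (fun t => P (t1 + t)) d + nW B (fun t => P (t1 + (d + t))) (len - t2)) := by
    conv_lhs => rw [e1]
    rw [nW_add, nW_add]
  have hR1 : nW B R t1 = nW B P t1 := by
    refine Finset.sum_congr rfl fun t ht => ?_
    rw [Finset.mem_range] at ht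
    show B (R t) (R (t + 1)) = B (P t) (P (t + 1))
    have h0 : R t = P t := by simp [hR, ht]
    have h1' : R (t + 1) = P (t + 1) := by
      rcases Nat.lt_or_ge (t + 1) t1 with h | h
      · simp [hR, h]
      · have he : t + 1 = t1 := by omega
        rw [he]
        simp only [hR, if_neg (lt_irrefl _)]
        rw [show t1 + d = t2 by omega, ← heq]
    rw [h0, h1']
  have hR2 : nW B (fun t => R (t1 + t)) (len - t2) = nW B (fun t => P (t1 + (d + t))) (len - t2) := by
    refine Finset.sum_congr rfl fun t _ => ?_
    show B (R (t1 + t)) (R (t1 + t + 1)) = B (P (t1 + (d + t))) (P (t1 + (d + (t + 1))))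
    have h0 : R (t1 + t) = P (t1 + (d + t)) := by
      simp only [hR, if_neg (by omega : ¬ t1 + t < t1)]
      congr 1
      omega
    have h1' : R (t1 + t + 1) = P (t1 + (d + (t + 1))) := by
      simp only [hR, if_neg (by omega : ¬ t1 + t + 1 < t1)]
      congr 1
      omega
    rw [h0, h1']
  have hRsplit : nW B R (len - d) = nW B R t1 + nW B (fun t => R (t1 + t)) (len - t2) := by
    conv_lhs => rw [e2]
    rw [nW_add]
  rw [hsplit, hRsplit, hR1, hR2]
  ring

end Stmt11Aux

namespace Stmt11Aux

variable {ι : Type*} [Fintype ι]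

section Walks

variable {B : ι → ι → ℝ}
variable (Hcyc : ∀ (len : ℕ) (P : ℕ → ι), 1 ≤ len → len ≤ Fintype.card ι →
    P 0 = P len → nW B P len ≤ 0)

include Hcyc in
lemma closed_nonpos : ∀ (len : ℕ) (P : ℕ → ι), P 0 = P len → nW B P len ≤ 0 := by
  intro len
  induction len using Nat.strong_induction_on with
  | _ len IH =>
    intro P hP
    rcases Nat.eq_zero_or_pos len with h0 | hpos
    · subst h0; simp [nW]
    by_cases hle : len ≤ Fintype.card ι
    · exact Hcyc len P hpos hle hP
    · push_neg at hle
      obtain ⟨a, b, hab, hfab⟩ := Fintype.exists_ne_map_eq_of_card_lt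
          (fun t : Fin len => P t.val) (by simpa using hle)
      set t1 := min a.val b.val with ht1
      set t2 := max a.val b.val with ht2
      have hvne : a.val ≠ b.val := fun h => hab (Fin.ext h)
      have h12 : t1 < t2 := by omega
      have h2len : t2 ≤ len := by
        have := a.isLt; have := b.isLt; omega
      have heq : P t1 = P t2 := by
        rcases le_total a.val b.val with h | h
        · rwa [ht1, ht2, min_eq_left h, max_eq_right h]
        · rw [ht1, ht2, min_eq_right h, max_eq_left h]; exact hfab.symm
      have hspl := nW_splice B P h12 h2len heq
      set d := t2 - t1 with hd
      have hQ : nW B (fun t => P (t1 + t)) d ≤ 0 := by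
        refine IH d (by omega) _ ?_
        show P (t1 + 0) = P (t1 + d)
        rw [Nat.add_zero, show t1 + d = t2 by omega, heq]
      have hRclosed : (fun t => if t < t1 then P t else P (t + d)) 0
          = (fun t => if t < t1 then P t else P (t + d)) (len - d) := by
        simp only
        have hlen : ¬ len - d < t1 := by omega
        rw [if_neg hlen, show len - d + d = len by omega]
        rcases Nat.eq_zero_or_pos t1 with h0 | h0
        · rw [if_neg (by omega), show (0 : ℕ) + d = t2 by omega, ← heq, h0, hP]
        · rw [if_pos h0, hP]
      have hR : nW B (fun t => if t < t1 then P t else P (t + d)) (len - d) ≤ 0 :=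
        IH (len - d) (by omega) _ hRclosed
      rw [hspl]
      linarith

include Hcyc in
lemma walk_le_lam {lam : ℝ} (hlam : 0 ≤ lam) (hB0 : ∀ i j, -lam ≤ B i j) :
    ∀ (len : ℕ) (P : ℕ → ι), nW B P len ≤ lam := by
  intro len P
  set Q : ℕ → ι := fun t => if t ≤ len then P t else P 0 with hQdef
  have hQclosed : Q 0 = Q (len + 1) := by
    simp [hQdef]
  have hc := closed_nonpos Hcyc (len + 1) Q hQclosed
  have hsum : nW B Q (len + 1) = nW B Q len + B (Q len) (Q (len + 1)) := by
    unfold nW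
    rw [Finset.sum_range_succ]
  have hQP : nW B Q len = nW B P len := by
    refine Finset.sum_congr rfl fun t ht => ?_
    rw [Finset.mem_range] at ht
    show B (Q t) (Q (t + 1)) = B (P t) (P (t + 1))
    rw [hQdef]
    simp only [if_pos (by omega : t ≤ len), if_pos (by omega : t + 1 ≤ len)]
  have hend : Q len = P len := by simp [hQdef]
  have hend1 : Q (len + 1) = P 0 := by simp [hQdef]
  have := hB0 (P len) (P 0)
  rw [hsum, hQP, hend, hend1] at hc
  linarith

lemma walk_le_pow : ∀ (len : ℕ) (P : ℕ → ι),
    nW B P (len + 1) ≤ mpPow1 B len (P 0) (P (len + 1)) := by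
  intro len
  induction len with
  | zero =>
    intro P
    simp [nW, mpPow1]
  | succ m IH =>
    intro P
    have hsplit : nW B P (m + 2) = B (P 0) (P 1) + nW B (fun t => P (1 + t)) (m + 1) := by
      have h := nW_add B P 1 (m + 1)
      rw [show (1 : ℕ) + (m + 1) = m + 2 by omega] at h
      rw [h]
      congr 1
      unfold nW
      rw [Finset.sum_range_one]
    rw [hsplit]
    have h2 := IH (fun t => P (1 + t))
    have h3 : B (P 0) (P 1) + nW B (fun t => P (1 + t)) (m + 1)
        ≤ B (P 0) (P 1) + mpPow1 B m (P 1) (P (m + 2)) := by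
      have e1 : (1 : ℕ) + 0 = 1 := rfl
      have e2 : (1 : ℕ) + (m + 1) = m + 2 := by omega
      rw [e1, e2] at h2
      linarith
    refine h3.trans ?_
    show _ ≤ mpMul B (mpPow1 B m) (P 0) (P (m + 2))
    exact le_fsup (fun j => B (P 0) j + mpPow1 B m j (P (m + 2))) (P 1)

lemma pow_exists_walk : ∀ (m : ℕ) (i j : ι), ∃ P : ℕ → ι,
    P 0 = i ∧ P (m + 1) = j ∧ mpPow1 B m i j = nW B P (m + 1) := by
  intro m
  induction m with
  | zero =>
    intro i j
    refine ⟨fun t => if t = 0 then i else j, by simp, by simp, ?_⟩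
    simp [nW, mpPow1]
  | succ m IH =>
    intro i j
    have hne : Nonempty ι := ⟨i⟩
    obtain ⟨j1, hj1⟩ := exists_fsup (fun j1 => B i j1 + mpPow1 B m j1 j)
    obtain ⟨P', hP0, hP1, hPw⟩ := IH j1 j
    refine ⟨fun t => Nat.casesOn t i P', rfl, hP1, ?_⟩
    have hw : nW B (fun t => Nat.casesOn t i P') (m + 2)
        = nW B P' (m + 1) + B i (P' 0) := by
      unfold nW
      rw [Finset.sum_range_succ']
      rfl
    rw [hw, hP0, ← hPw]
    show mpMul B (mpPow1 B m) i j = _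
    rw [show mpMul B (mpPow1 B m) i j = ⨆ j1, B i j1 + mpPow1 B m j1 j from rfl, hj1]
    ring

end Walks

end Stmt11Aux

namespace Stmt11Aux

variable {ι : Type*} [Fintype ι] [DecidableEq ι]

section Star

variable {B : ι → ι → ℝ}
variable (Hcyc : ∀ (len : ℕ) (P : ℕ → ι), 1 ≤ len → len ≤ Fintype.card ι →
    P 0 = P len → nW B P len ≤ 0)

lemma star_nonneg (i : ι) : 0 ≤ kleeneStar B i i := by
  simp [kleeneStar]

include Hcyc in
lemma walk_le_star : ∀ (len : ℕ) (P : ℕ → ι), nW B P len ≤ kleeneStar B (P 0) (P len) := by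
  intro len
  induction len using Nat.strong_induction_on with
  | _ len IH =>
    intro P
    rcases Nat.eq_zero_or_pos len with h0 | hpos
    · subst h0
      have : nW B P 0 = 0 := by simp [nW]
      rw [this]
      exact star_nonneg (P 0)
    by_cases hinj : Function.Injective (fun t : Fin (len + 1) => P t.val)
    · have hcard : len + 1 ≤ Fintype.card ι := by
        simpa using Fintype.card_le_of_injective _ hinj
      have hne : P 0 ≠ P len := by
        intro h
        have h2 : (fun t : Fin (len + 1) => P t.val) ⟨0, by omega⟩
            = (fun t : Fin (len + 1) => P t.val) ⟨len, by omega⟩ := h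
        have := hinj h2
        simp only [Fin.mk.injEq] at this
        omega
      obtain ⟨s, rfl⟩ : ∃ s, len = s + 1 := ⟨len - 1, by omega⟩
      have h1 := walk_le_pow (B := B) s P
      refine h1.trans ?_
      rw [kleeneStar, if_neg hne]
      exact le_fsup (fun m : Fin (Fintype.card ι - 1) => mpPow1 B (m : ℕ) (P 0) (P (s + 1)))
        ⟨s, by omega⟩
    · rw [Function.not_injective_iff] at hinj
      obtain ⟨a, b, hfab, hab⟩ := hinj
      set t1 := min a.val b.val with ht1
      set t2 := max a.val b.val with ht2
      have hvne : a.val ≠ b.val := fun h => hab (Fin.ext h)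
      have h12 : t1 < t2 := by omega
      have h2len : t2 ≤ len := by
        have := a.isLt; have := b.isLt; omega
      have heq : P t1 = P t2 := by
        rcases le_total a.val b.val with h | h
        · rwa [ht1, ht2, min_eq_left h, max_eq_right h]
        · rw [ht1, ht2, min_eq_right h, max_eq_left h]; exact hfab.symm
      have hspl := nW_splice B P h12 h2len heq
      set d := t2 - t1 with hd
      have hQ : nW B (fun t => P (t1 + t)) d ≤ 0 := by
        refine closed_nonpos Hcyc d _ ?_
        show P (t1 + 0) = P (t1 + d)
        rw [Nat.add_zero, show t1 + d = t2 by omega, heq]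
      set R : ℕ → ι := fun t => if t < t1 then P t else P (t + d) with hR
      have hR0 : R 0 = P 0 := by
        rcases Nat.eq_zero_or_pos t1 with h0 | h0
        · simp only [hR, if_neg (by omega : ¬ (0:ℕ) < t1)]
          rw [show (0 : ℕ) + d = t2 by omega, ← heq, h0]
        · simp [hR, h0]
      have hRend : R (len - d) = P len := by
        simp only [hR, if_neg (by omega : ¬ len - d < t1)]
        rw [show len - d + d = len by omega]
      have hRw : nW B R (len - d) ≤ kleeneStar B (R 0) (R (len - d)) :=
        IH (len - d) (by omega) R
      rw [hR0, hRend] at hRw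
      rw [hspl]
      linarith

include Hcyc in
lemma pow_le_star (m : ℕ) (i j : ι) : mpPow1 B m i j ≤ kleeneStar B i j := by
  obtain ⟨P, h0, h1, hw⟩ := pow_exists_walk m i j
  rw [hw, ← h0, ← h1]
  exact walk_le_star Hcyc (m + 1) P

include Hcyc in
lemma pow_le_lam {lam : ℝ} (hlam : 0 ≤ lam) (hB0 : ∀ i j, -lam ≤ B i j)
    (m : ℕ) (i j : ι) : mpPow1 B m i j ≤ lam := by
  obtain ⟨P, h0, h1, hw⟩ := pow_exists_walk m i j
  rw [hw]
  exact walk_le_lam Hcyc hlam hB0 (m + 1) P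

include Hcyc in
lemma star_le_lam {lam : ℝ} (hlam : 0 ≤ lam) (hB0 : ∀ i j, -lam ≤ B i j)
    (i j : ι) : kleeneStar B i j ≤ lam := by
  have hsup : (⨆ m : Fin (Fintype.card ι - 1), mpPow1 B (m : ℕ) i j) ≤ lam := by
    rcases isEmpty_or_nonempty (Fin (Fintype.card ι - 1)) with he | hne
    · rw [Real.iSup_of_isEmpty]; exact hlam
    · exact fsup_le fun m => pow_le_lam Hcyc hlam hB0 (m : ℕ) i j
  rcases eq_or_ne i j with rfl | hij
  · simp only [kleeneStar, if_pos rfl]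
    exact max_le hlam hsup
  · simp only [kleeneStar, if_neg hij]
    exact hsup

/-- `z k = max_{k'} (B*)_{k k'}`. -/
noncomputable def zf (B : ι → ι → ℝ) (k : ι) : ℝ := ⨆ j, kleeneStar B k j

lemma z_nonneg (k : ι) : 0 ≤ zf B k :=
  le_trans (star_nonneg k) (le_fsup (fun j => kleeneStar B k j) k)

include Hcyc in
lemma z_le_lam {lam : ℝ} (hlam : 0 ≤ lam) (hB0 : ∀ i j, -lam ≤ B i j) (k : ι) :
    zf B k ≤ lam := by
  have : Nonempty ι := ⟨k⟩
  exact fsup_le fun j => star_le_lam Hcyc hlam hB0 k j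

include Hcyc in
lemma pow_le_z (m : ℕ) (k j : ι) : mpPow1 B m k j ≤ zf B k :=
  (pow_le_star Hcyc m k j).trans (le_fsup (fun j' => kleeneStar B k j') j)

include Hcyc in
lemma add_star_le (k j j' : ι) : B k j + kleeneStar B j j' ≤ zf B k := by
  have hbase : B k j ≤ zf B k := pow_le_z Hcyc 0 k j
  have hsup : B k j + (⨆ m : Fin (Fintype.card ι - 1), mpPow1 B (m : ℕ) j j') ≤ zf B k := by
    rcases isEmpty_or_nonempty (Fin (Fintype.card ι - 1)) with he | hne
    · rw [Real.iSup_of_isEmpty, add_zero]; exact hbase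
    · rw [add_comm, ← le_sub_iff_add_le]
      refine fsup_le fun m => ?_
      rw [le_sub_iff_add_le, add_comm]
      have h1 : B k j + mpPow1 B (m : ℕ) j j' ≤ mpPow1 B ((m : ℕ) + 1) k j' :=
        le_fsup (fun j1 => B k j1 + mpPow1 B (m : ℕ) j1 j') j
      exact h1.trans (pow_le_z Hcyc _ k j')
  unfold kleeneStar
  split
  · rcases le_or_gt (⨆ m : Fin (Fintype.card ι - 1), mpPow1 B (m : ℕ) j j) 0 with h | h
    · rw [max_eq_left h, add_zero]; exact hbase
    · rw [max_eq_right h.le]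
      rename_i hjj
      rw [hjj] at hsup ⊢
      exact hsup
  · exact hsup

include Hcyc in
lemma Bz_le (k j : ι) : B k j + zf B j ≤ zf B k := by
  have : Nonempty ι := ⟨k⟩
  rw [add_comm, ← le_sub_iff_add_le]
  refine fsup_le fun j' => ?_
  rw [le_sub_iff_add_le, add_comm]
  exact add_star_le Hcyc k j j'

include Hcyc in
lemma z_attained (k : ι) (hz : 0 < zf B k) : ∃ j, B k j + zf B j = zf B k := by
  have : Nonempty ι := ⟨k⟩
  obtain ⟨j', hj'⟩ := exists_fsup (fun j => kleeneStar B k j)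
  have hstar : zf B k = kleeneStar B k j' := hj'
  have hpow : ∃ (m : ℕ) (jj : ι), zf B k = mpPow1 B m k jj := by
    rcases isEmpty_or_nonempty (Fin (Fintype.card ι - 1)) with he | hne
    · exfalso
      rw [hstar] at hz
      unfold kleeneStar at hz
      split at hz
      · rw [Real.iSup_of_isEmpty] at hz; simp at hz
      · rw [Real.iSup_of_isEmpty] at hz; exact lt_irrefl _ hz
    · unfold kleeneStar at hstar
      split at hstar
      · rename_i hkj
        subst hkj
        rcases le_or_gt (⨆ m : Fin (Fintype.card ι - 1), mpPow1 B (m : ℕ) k k) 0 with h | h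
        · exfalso
          rw [hstar, max_eq_left h] at hz
          exact lt_irrefl _ hz
        · have hS : zf B k = ⨆ m : Fin (Fintype.card ι - 1), mpPow1 B (m : ℕ) k k := by
            rw [hstar, max_eq_right h.le]
          obtain ⟨m, hm⟩ := exists_fsup (fun m : Fin (Fintype.card ι - 1) => mpPow1 B (m : ℕ) k k)
          exact ⟨m, k, by rw [hS, hm]⟩
      · obtain ⟨m, hm⟩ := exists_fsup (fun m : Fin (Fintype.card ι - 1) => mpPow1 B (m : ℕ) k j')
        exact ⟨m, j', by rw [hstar, hm]⟩
  obtain ⟨m, jj, hmjj⟩ := hpow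
  match m with
  | 0 =>
    have hB : zf B k = B k jj := hmjj
    have h1 : B k jj + zf B jj ≤ zf B k := Bz_le Hcyc k jj
    have h2 : 0 ≤ zf B jj := z_nonneg jj
    exact ⟨jj, by linarith⟩
  | m + 1 =>
    have hM : mpPow1 B (m + 1) k jj = ⨆ j1, B k j1 + mpPow1 B m j1 jj := rfl
    obtain ⟨j1, hj1⟩ := exists_fsup (fun j1 => B k j1 + mpPow1 B m j1 jj)
    have h1 : zf B k = B k j1 + mpPow1 B m j1 jj := by rw [hmjj, hM, hj1]
    have h2 : mpPow1 B m j1 jj ≤ zf B j1 := pow_le_z Hcyc m j1 jj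
    have h3 : B k j1 + zf B j1 ≤ zf B k := Bz_le Hcyc k j1
    exact ⟨j1, by linarith⟩

end Star

end Stmt11Aux

open Stmt11Aux

/-- existence of a `(K,L)` Łukasiewicz eigenvector associated with
`λ ∈ (0,1)` is equivalent to `ρ(A_{KK}) ≤ λ` together with
`A^{(λ)}_{LK} ⊗ (A^{(λ)}_{KK})* ⊗ 𝟘_K ≤ 𝟘_L`. -/
theorem stmt11 {n : ℕ} (A : Fin n → Fin n → ℝ) (hA : ∀ i j, A i j ∈ Set.Icc (0 : ℝ) 1)
    (lam : ℝ) (hlam0 : 0 < lam) (hlam1 : lam < 1)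
    (K L : Finset (Fin n)) (hK : K.Nonempty) (hL : L.Nonempty)
    (hdisj : Disjoint K L) (hcover : K ∪ L = Finset.univ) :
    (∃ x : Fin n → ℝ, (∀ i, x i ∈ Set.Icc (0 : ℝ) 1) ∧
        (∀ i, lukMulVec A x i = lukSMul lam x i) ∧
        (∀ i ∈ K, 1 - lam ≤ x i) ∧ (∀ i ∈ L, x i ≤ 1 - lam)) ↔
      (maxCycleMean (fun i j : ↥K => A i.1 j.1) ≤ lam ∧
        ∀ l ∈ L, ∀ k k' : ↥K,
          A l k.1 - lam + kleeneStar (fun i j : ↥K => A i.1 j.1 - lam) k k' ≤ 0) := by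
  classical
  have hmemL : ∀ i : Fin n, i ∉ K → i ∈ L := by
    intro i h
    have h2 : i ∈ K ∪ L := hcover ▸ Finset.mem_univ i
    rcases Finset.mem_union.mp h2 with h' | h'
    · exact absurd h' h
    · exact h'
  have hNK : Nonempty ↥K := ⟨⟨hK.choose, hK.choose_spec⟩⟩
  set A' : ↥K → ↥K → ℝ := fun i j => A i.1 j.1 with hA'def
  set B' : ↥K → ↥K → ℝ := fun i j => A i.1 j.1 - lam with hB'def
  constructor
  · rintro ⟨x, hx01, heig, hxK, hxL⟩
    have hKrow : ∀ i ∈ K, ∀ j, A i j + x j ≤ lam + x i := by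
      intro i hi j
      have h1 : max 0 (A i j + x j - 1) ≤ lukMulVec A x i :=
        le_fsup (fun j => max 0 (A i j + x j - 1)) j
      rw [heig i] at h1
      have h2 : lukSMul lam x i = lam + x i - 1 := by
        unfold lukSMul
        exact max_eq_right (by linarith [hxK i hi])
      rw [h2] at h1
      have h3 := le_trans (le_max_right 0 (A i j + x j - 1)) h1
      linarith
    have hLrow : ∀ l ∈ L, ∀ j, A l j + x j ≤ 1 := by
      intro l hl j
      have h1 : max 0 (A l j + x j - 1) ≤ lukMulVec A x l :=
        le_fsup (fun j => max 0 (A l j + x j - 1)) j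
      rw [heig l] at h1
      have h2 : lukSMul lam x l = 0 := by
        unfold lukSMul
        exact max_eq_left (by linarith [hxL l hl])
      rw [h2] at h1
      have h3 := le_trans (le_max_right 0 (A l j + x j - 1)) h1
      linarith
    have hBxy : ∀ i j : ↥K, B' i j ≤ x i.1 - x j.1 := by
      intro i j
      have h := hKrow i.1 i.2 j.1
      have hB : B' i j = A i.1 j.1 - lam := rfl
      rw [hB]
      linarith
    have hpow : ∀ m (i j : ↥K), mpPow1 B' m i j ≤ x i.1 - x j.1 := by
      intro m
      induction m with
      | zero => exact hBxy
      | succ m IH =>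
        intro i j
        show (⨆ j1, B' i j1 + mpPow1 B' m j1 j) ≤ x i.1 - x j.1
        refine fsup_le fun j1 => ?_
        have h1 := hBxy i j1
        have h2 := IH j1 j
        linarith
    have hstar : ∀ k k' : ↥K, kleeneStar B' k k' ≤ max 0 (x k.1 - x k'.1) := by
      intro k k'
      have hsup : (⨆ m : Fin (Fintype.card ↥K - 1), mpPow1 B' (m : ℕ) k k')
          ≤ max 0 (x k.1 - x k'.1) := by
        rcases isEmpty_or_nonempty (Fin (Fintype.card ↥K - 1)) with he | hne
        · rw [Real.iSup_of_isEmpty]; exact le_max_left _ _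
        · exact fsup_le fun m => (hpow (m : ℕ) k k').trans (le_max_right _ _)
      rcases eq_or_ne k k' with rfl | hkk
      · simp only [kleeneStar, if_pos rfl]
        exact max_le (le_max_left _ _) hsup
      · simp only [kleeneStar, if_neg hkk]
        exact hsup
    refine ⟨?_, ?_⟩
    · unfold maxCycleMean
      refine Real.sSup_le ?_ hlam0.le
      rintro r ⟨k, hk1, hk2, P, hPc, rfl⟩
      rw [div_le_iff₀ (by positivity : (0:ℝ) < (k:ℝ))]
      have hb := walkWeight_eq_nW A' k P
      set Pc : ℕ → ↥K := fun t => P ⟨min t k, by omega⟩ with hPcdef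
      have hterm : ∀ t, A' (Pc t) (Pc (t + 1)) ≤ lam + (x (Pc t).1 - x (Pc (t + 1)).1) := by
        intro t
        have h := hKrow (Pc t).1 (Pc t).2 (Pc (t + 1)).1
        have hAe : A' (Pc t) (Pc (t + 1)) = A (Pc t).1 (Pc (t + 1)).1 := rfl
        linarith [hAe ▸ h]
      have hsum : nW A' Pc k ≤ (k : ℝ) * lam + (x (Pc 0).1 - x (Pc k).1) := by
        calc nW A' Pc k ≤ ∑ t ∈ Finset.range k, (lam + (x (Pc t).1 - x (Pc (t + 1)).1)) :=
              Finset.sum_le_sum fun t _ => hterm t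
          _ = (k : ℝ) * lam + (x (Pc 0).1 - x (Pc k).1) := by
              rw [Finset.sum_add_distrib, Finset.sum_const, Finset.card_range, nsmul_eq_mul,
                Finset.sum_range_sub' (fun t => x (Pc t).1) k]
      have h0 : Pc 0 = P 0 := congrArg P (Fin.ext (by simp))
      have hk' : Pc k = P (Fin.last k) := congrArg P (Fin.ext (by simp [Fin.last]))
      rw [h0, hk', hPc] at hsum
      rw [hb]
      have : x (P (Fin.last k)).1 - x (P (Fin.last k)).1 = 0 := by ring
      rw [this, add_zero] at hsum
      rw [hPcdef] at hsum
      linarith [hsum]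
    · intro l hl k k'
      have h1 := hstar k k'
      have h2 := hLrow l hl k.1
      have h3 := hxK k.1 k.2
      have h4 := hxK k'.1 k'.2
      rcases max_cases (0:ℝ) (x k.1 - x k'.1) with ⟨hm, _⟩ | ⟨hm, _⟩ <;> rw [hm] at h1 <;>
        linarith
  · rintro ⟨hmcm, hLK⟩
    have hBdd : BddAbove {r | ∃ k, 1 ≤ k ∧ k ≤ Fintype.card ↥K ∧
        ∃ P : Fin (k + 1) → ↥K, P 0 = P (Fin.last k) ∧ r = walkWeight A' k P / (k : ℝ)} := by
      refine ⟨1, ?_⟩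
      rintro r ⟨k, hk1, hk2, P, hPc, rfl⟩
      rw [div_le_one (by positivity : (0:ℝ) < (k:ℝ))]
      calc walkWeight A' k P ≤ ∑ _t : Fin k, (1:ℝ) :=
            Finset.sum_le_sum fun t _ => (hA (P t.castSucc).1 (P t.succ).1).2
        _ = (k : ℝ) := by simp
    have Hcyc : ∀ (len : ℕ) (Q : ℕ → ↥K), 1 ≤ len → len ≤ Fintype.card ↥K →
        Q 0 = Q len → nW B' Q len ≤ 0 := by
      intro len Q h1 h2 hcl
      have hP0 : (fun t : Fin (len + 1) => Q t.val) 0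
          = (fun t : Fin (len + 1) => Q t.val) (Fin.last len) := by
        simp only [Fin.val_zero, Fin.val_last]
        exact hcl
      have hmem : walkWeight A' len (fun t : Fin (len + 1) => Q t.val) / (len : ℝ) ∈
          {r | ∃ k, 1 ≤ k ∧ k ≤ Fintype.card ↥K ∧
            ∃ P : Fin (k + 1) → ↥K, P 0 = P (Fin.last k) ∧ r = walkWeight A' k P / (k : ℝ)} :=
        ⟨len, h1, h2, _, hP0, rfl⟩
      have hmcm' : sSup {r | ∃ k, 1 ≤ k ∧ k ≤ Fintype.card ↥K ∧
          ∃ P : Fin (k + 1) → ↥K, P 0 = P (Fin.last k) ∧ r = walkWeight A' k P / (k : ℝ)}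
          ≤ lam := hmcm
      have hle := (le_csSup hBdd hmem).trans hmcm'
      rw [div_le_iff₀ (by positivity : (0:ℝ) < (len:ℝ)), ← nW_toFin] at hle
      have hBA : nW B' Q len = nW A' Q len - (len : ℝ) * lam := by
        unfold nW
        have he : ∀ t ∈ Finset.range len, B' (Q t) (Q (t + 1)) = A' (Q t) (Q (t + 1)) - lam :=
          fun t _ => rfl
        rw [Finset.sum_congr rfl he, Finset.sum_sub_distrib, Finset.sum_const,
          Finset.card_range, nsmul_eq_mul]
      rw [hBA]
      linarith
    have hB0 : ∀ i j : ↥K, -lam ≤ B' i j := by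
      intro i j
      have hB : B' i j = A i.1 j.1 - lam := rfl
      rw [hB]
      linarith [(hA i.1 j.1).1]
    have hz0 : ∀ k : ↥K, 0 ≤ zf B' k := z_nonneg
    have hzlam : ∀ k : ↥K, zf B' k ≤ lam := z_le_lam Hcyc hlam0.le hB0
    have hLz : ∀ l ∈ L, ∀ k : ↥K, A l k.1 - lam + zf B' k ≤ 0 := by
      intro l hl k
      have h : zf B' k ≤ -(A l k.1 - lam) := by
        refine fsup_le fun k' => ?_
        linarith [hLK l hl k k']
      linarith
    set x : Fin n → ℝ := fun i => if h : i ∈ K then 1 - lam + zf B' ⟨i, h⟩ else 0 with hxdef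
    have hxKval : ∀ i (h : i ∈ K), x i = 1 - lam + zf B' ⟨i, h⟩ := fun i h => by
      simp [hxdef, h]
    have hxLval : ∀ i, i ∉ K → x i = 0 := fun i h => by simp [hxdef, h]
    refine ⟨x, ?_, ?_, ?_, ?_⟩
    · intro i
      by_cases h : i ∈ K
      · rw [hxKval i h]
        exact ⟨by linarith [hz0 ⟨i, h⟩], by linarith [hzlam ⟨i, h⟩]⟩
      · rw [hxLval i h]
        exact ⟨le_refl 0, by linarith⟩
    · intro i
      have hNn : Nonempty (Fin n) := ⟨i⟩
      by_cases hiK : i ∈ K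
      · have hxk : x i = 1 - lam + zf B' ⟨i, hiK⟩ := hxKval i hiK
        have hrhs : lukSMul lam x i = zf B' ⟨i, hiK⟩ := by
          unfold lukSMul
          rw [hxk, show lam + (1 - lam + zf B' ⟨i, hiK⟩) - 1 = zf B' ⟨i, hiK⟩ by ring]
          exact max_eq_right (hz0 ⟨i, hiK⟩)
        have hup : lukMulVec A x i ≤ zf B' ⟨i, hiK⟩ := by
          show (⨆ j, max 0 (A i j + x j - 1)) ≤ zf B' ⟨i, hiK⟩
          refine fsup_le fun j => ?_
          refine max_le (hz0 ⟨i, hiK⟩) ?_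
          by_cases hjK : j ∈ K
          · rw [hxKval j hjK]
            have hb := Bz_le Hcyc ⟨i, hiK⟩ ⟨j, hjK⟩
            have hBe : B' ⟨i, hiK⟩ ⟨j, hjK⟩ = A i j - lam := rfl
            rw [hBe] at hb
            linarith
          · rw [hxLval j hjK]
            linarith [(hA i j).2, hz0 ⟨i, hiK⟩]
        have hlow : zf B' ⟨i, hiK⟩ ≤ lukMulVec A x i := by
          show zf B' ⟨i, hiK⟩ ≤ ⨆ j, max 0 (A i j + x j - 1)
          rcases eq_or_lt_of_le (hz0 ⟨i, hiK⟩) with hz | hz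
          · rw [← hz]
            exact le_trans (le_max_left 0 _) (le_fsup (fun j => max 0 (A i j + x j - 1)) i)
          · obtain ⟨j', hj'⟩ := z_attained Hcyc ⟨i, hiK⟩ hz
            have hBe : B' ⟨i, hiK⟩ j' = A i j'.1 - lam := rfl
            have hterm : A i j'.1 + x j'.1 - 1 = zf B' ⟨i, hiK⟩ := by
              rw [hxKval j'.1 j'.2]
              rw [hBe] at hj'
              have : zf B' ⟨j'.1, j'.2⟩ = zf B' j' := rfl
              rw [this]
              linarith [hj']
            calc zf B' ⟨i, hiK⟩ = max 0 (A i j'.1 + x j'.1 - 1) := by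
                  rw [hterm]
                  exact (max_eq_right (hz0 ⟨i, hiK⟩)).symm
              _ ≤ ⨆ j, max 0 (A i j + x j - 1) :=
                  le_fsup (fun j => max 0 (A i j + x j - 1)) j'.1
        rw [hrhs]
        exact le_antisymm hup hlow
      · have hiL : i ∈ L := hmemL i hiK
        have hxi : x i = 0 := hxLval i hiK
        have hrhs : lukSMul lam x i = 0 := by
          unfold lukSMul
          rw [hxi]
          exact max_eq_left (by linarith)
        have hup : lukMulVec A x i ≤ 0 := by
          show (⨆ j, max 0 (A i j + x j - 1)) ≤ 0
          refine fsup_le fun j => ?_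
          refine max_le le_rfl ?_
          by_cases hjK : j ∈ K
          · rw [hxKval j hjK]
            have := hLz i hiL ⟨j, hjK⟩
            linarith
          · rw [hxLval j hjK]
            linarith [(hA i j).2]
        have hlow : (0:ℝ) ≤ lukMulVec A x i := by
          show (0:ℝ) ≤ ⨆ j, max 0 (A i j + x j - 1)
          exact le_trans (le_max_left 0 _) (le_fsup (fun j => max 0 (A i j + x j - 1)) i)
        rw [hrhs]
        exact le_antisymm hup hlow
    · intro i hi
      rw [hxKval i hi]
      linarith [hz0 ⟨i, hi⟩]
    · intro i hi
      have hiK : i ∉ K := Finset.disjoint_right.mp hdisj hi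
      rw [hxLval i hiK]
      linarith
end

section
/- Let A ∈ [0,1]^{n×n}, 0 < λ < 1, and let (K,L) be a partition of {1,…,n} into nonempty proper subsets such that ρ(A_{KK}) < λ and A^(λ)_{LK} ⊗ (A^(λ)_{KK})* ⊗ 𝟘_K ≤ 𝟘_L. Let S = A^(1)_{LL} ⊕ A^(1)_{LK} ⊗ (A^(λ)_{KK})* ⊗ A^(λ)_{KL} (the tropical Schur complement Schur^{(1)}(K,λ,A)). Then x ∈ [0,1]^n is a (K,L)-Łukasiewicz eigenvector of A associated with λ if and only if: for every j ∈ L, 0 ≤ x_j ≤ min(1 − λ, min_{i∈L}(−S_{ij})), and for every k ∈ K, x_k = max_{k'∈K} ( ((A^(λ)_{KK})*)_{kk'} + max( max_{j∈L}(a_{k'j} − λ + x_j), 1 − λ ) ). -/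
open Finset

set_option linter.unusedSectionVars false

section Helpers
variable {τ : Type*} [Fintype τ] [Nonempty τ]

lemma fsup_le {f : τ → ℝ} {a : ℝ} (h : ∀ i, f i ≤ a) : (⨆ i, f i) ≤ a := ciSup_le h

lemma le_fsup (f : τ → ℝ) (i : τ) : f i ≤ ⨆ j, f j :=
  le_ciSup (Set.Finite.bddAbove (Set.finite_range f)) i

lemma fsup_exists (f : τ → ℝ) : ∃ i, (⨆ j, f j) = f i := by
  obtain ⟨i, hi⟩ := Finite.exists_max f
  exact ⟨i, le_antisymm (fsup_le hi) (le_fsup f i)⟩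

lemma fsup_add (f : τ → ℝ) (a : ℝ) : (⨆ i, f i) + a = ⨆ i, (f i + a) := by
  obtain ⟨i, hi⟩ := fsup_exists f
  obtain ⟨j, hj⟩ := fsup_exists (fun i => f i + a)
  rw [hi, hj]
  have h1 : f i + a ≤ f j + a := hj ▸ le_fsup (fun i => f i + a) i
  have h2 : f j ≤ f i := hi ▸ le_fsup f j
  linarith

lemma fsup_mono {f g : τ → ℝ} (h : ∀ i, f i ≤ g i) : (⨆ i, f i) ≤ ⨆ i, g i :=
  fsup_le fun i => (h i).trans (le_fsup g i)

lemma max0_fsup (f : τ → ℝ) : (⨆ i, max 0 (f i)) = max 0 (⨆ i, f i) := by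
  apply le_antisymm
  · exact fsup_le fun i => max_le (le_max_left _ _) ((le_fsup f i).trans (le_max_right _ _))
  · refine max_le ?_ (fsup_mono fun i => le_max_right _ _)
    obtain ⟨i⟩ := (inferInstance : Nonempty τ)
    exact (le_max_left 0 (f i)).trans (le_fsup (fun i => max 0 (f i)) i)

lemma fsup_max (f g : τ → ℝ) : (⨆ i, max (f i) (g i)) = max (⨆ i, f i) (⨆ i, g i) := by
  apply le_antisymm
  · exact fsup_le fun i => max_le_max (le_fsup f i) (le_fsup g i)
  · exact max_le (fsup_mono fun i => le_max_left _ _) (fsup_mono fun i => le_max_right _ _)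

end Helpers

lemma add_fsup {τ : Type*} [Fintype τ] [Nonempty τ] (a : ℝ) (f : τ → ℝ) :
    a + (⨆ i, f i) = ⨆ i, (a + f i) := by
  rw [add_comm, fsup_add]; exact iSup_congr fun i => add_comm _ _

section MP
variable {ι κ τ : Type*} [Fintype κ] [Fintype τ] [Nonempty κ] [Nonempty τ]

lemma fsup_comm (f : κ → τ → ℝ) : (⨆ k, ⨆ j, f k j) = ⨆ j, ⨆ k, f k j := by
  apply le_antisymm
  · exact fsup_le fun k => fsup_le fun j =>
      le_trans (le_fsup (fun k => f k j) k) (le_fsup (fun j => ⨆ k, f k j) j)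
  · exact fsup_le fun j => fsup_le fun k =>
      le_trans (le_fsup (fun j => f k j) j) (le_fsup (fun k => ⨆ j, f k j) k)

lemma mpMul_assoc {σ : Type*} (A : ι → κ → ℝ) (B : κ → τ → ℝ) (C : τ → σ → ℝ) (i : ι) (l : σ) :
    mpMul (mpMul A B) C i l = mpMul A (mpMul B C) i l := by
  have h1 : mpMul (mpMul A B) C i l = ⨆ k, ⨆ j, (A i j + B j k + C k l) := by
    unfold mpMul
    exact iSup_congr fun k => fsup_add _ _
  have h2 : mpMul A (mpMul B C) i l = ⨆ j, ⨆ k, (A i j + B j k + C k l) := by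
    unfold mpMul
    refine iSup_congr fun j => ?_
    rw [add_fsup]
    exact iSup_congr fun k => (add_assoc _ _ _).symm
  rw [h1, h2, fsup_comm]

lemma mpMulVec_mpMul (A : ι → κ → ℝ) (B : κ → τ → ℝ) (x : τ → ℝ) (i : ι) :
    mpMulVec (mpMul A B) x i = mpMulVec A (mpMulVec B x) i := by
  have h1 : mpMulVec (mpMul A B) x i = ⨆ k, ⨆ j, (A i j + B j k + x k) := by
    unfold mpMulVec mpMul
    exact iSup_congr fun k => fsup_add _ _
  have h2 : mpMulVec A (mpMulVec B x) i = ⨆ j, ⨆ k, (A i j + B j k + x k) := by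
    unfold mpMulVec
    refine iSup_congr fun j => ?_
    rw [add_fsup]
    exact iSup_congr fun k => (add_assoc _ _ _).symm
  rw [h1, h2, fsup_comm]

lemma mpMulVec_mono (A : ι → κ → ℝ) {x y : κ → ℝ} (h : ∀ j, x j ≤ y j) (i : ι) :
    mpMulVec A x i ≤ mpMulVec A y i :=
  fsup_mono fun j => by have := h j; simpa using add_le_add_left this (A i j)

lemma mpMulVec_mono_mat {A A' : ι → κ → ℝ} (h : ∀ i j, A i j ≤ A' i j) (x : κ → ℝ) (i : ι) :
    mpMulVec A x i ≤ mpMulVec A' x i :=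
  fsup_mono fun j => by have := h i j; linarith

lemma mpMulVec_max (A : ι → κ → ℝ) (x y : κ → ℝ) (i : ι) :
    mpMulVec A (fun j => max (x j) (y j)) i = max (mpMulVec A x i) (mpMulVec A y i) := by
  unfold mpMulVec
  rw [← fsup_max]
  exact iSup_congr fun j => (max_add_add_left _ _ _).symm

end MP

section Pow
variable {ι : Type*} [Fintype ι] [Nonempty ι]

lemma mpPow1_comm (A : ι → ι → ℝ) (m : ℕ) (i j : ι) :
    mpMul A (mpPow1 A m) i j = mpMul (mpPow1 A m) A i j := by
  induction m generalizing i j with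
  | zero => rfl
  | succ m ih =>
    have e1 : mpMul A (mpPow1 A (m+1)) i j = mpMul (mpMul A (mpPow1 A m)) A i j := by
      rw [mpMul_assoc]
      show mpMul A (mpMul A (mpPow1 A m)) i j = _
      have : ∀ k l, mpMul A (mpPow1 A m) k l = mpMul (mpPow1 A m) A k l := ih
      unfold mpMul
      exact iSup_congr fun k => congrArg (fun z => A i k + z) (this k j)
    rw [e1]
    rfl
end Pow

section Walk
variable {ι : Type*} [Fintype ι] [Nonempty ι]

/-- Weight of an `ℕ`-indexed walk of length `k`. -/
noncomputable def wgt (B : ι → ι → ℝ) (k : ℕ) (P : ℕ → ι) : ℝ :=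
  ∑ t ∈ Finset.range k, B (P t) (P (t+1))

lemma wgt_succ_first (B : ι → ι → ℝ) (k : ℕ) (P : ℕ → ι) :
    wgt B (k+1) P = B (P 0) (P 1) + wgt B k (fun t => P (t+1)) := by
  unfold wgt
  rw [Finset.sum_range_succ' (fun t => B (P t) (P (t+1))) k]
  rw [add_comm]

lemma wgt_le_pow (B : ι → ι → ℝ) (s : ℕ) (P : ℕ → ι) :
    wgt B (s+1) P ≤ mpPow1 B s (P 0) (P (s+1)) := by
  induction s generalizing P with
  | zero => simp [wgt, mpPow1]
  | succ s ih =>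
    rw [wgt_succ_first]
    have h2 := ih (fun t => P (t+1))
    calc B (P 0) (P 1) + wgt B (s+1) (fun t => P (t+1))
        ≤ B (P 0) (P 1) + mpPow1 B s (P 1) (P (s+2)) := by
          exact add_le_add le_rfl h2
      _ ≤ mpPow1 B (s+1) (P 0) (P (s+2)) :=
          le_fsup (fun k => B (P 0) k + mpPow1 B s k (P (s+2))) (P 1)

lemma pow_eq_wgt (B : ι → ι → ℝ) (s : ℕ) (i j : ι) :
    ∃ P : ℕ → ι, P 0 = i ∧ P (s+1) = j ∧ mpPow1 B s i j = wgt B (s+1) P := by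
  induction s generalizing i with
  | zero =>
    refine ⟨fun t => if t = 0 then i else j, by simp, by simp, ?_⟩
    simp [wgt, mpPow1]
  | succ s ih =>
    obtain ⟨k0, hk0⟩ := fsup_exists (fun k => B i k + mpPow1 B s k j)
    obtain ⟨Q, hQ0, hQl, hQw⟩ := ih k0
    refine ⟨fun t => if t = 0 then i else Q (t-1), by simp, by simp [hQl], ?_⟩
    have hshift : (fun t => (if (t:ℕ)+1 = 0 then i else Q ((t:ℕ)+1-1))) = Q := by
      funext t; simp
    rw [wgt_succ_first]
    simp only [hshift]
    show mpPow1 B (s+1) i j = B i (Q 0) + wgt B (s+1) Q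
    have : mpPow1 B (s+1) i j = B i k0 + mpPow1 B s k0 j := hk0
    rw [this, hQ0, hQw]

/-- Splicing out the segment `[a,b]` of a walk when `P a = P b`. -/
lemma wgt_splice (B : ι → ι → ℝ) (k a b : ℕ) (hab : a < b) (hbk : b ≤ k)
    (P : ℕ → ι) (hP : P a = P b) :
    wgt B k P = wgt B (k - (b-a)) (fun t => P (if t ≤ a then t else t + (b-a)))
      + wgt B (b-a) (fun t => P (a+t)) := by
  set d := b - a with hd
  set f : ℕ → ℝ := fun t => B (P t) (P (t+1)) with hf
  have hsplit : ∀ (m l : ℕ), m ≤ l → ∀ g : ℕ → ℝ,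
      ∑ t ∈ Finset.range l, g t = (∑ t ∈ Finset.range m, g t) + ∑ t ∈ Finset.range (l-m), g (m+t) := by
    intro m l hml g
    rw [Finset.range_eq_Ico, ← Finset.sum_Ico_consecutive _ (Nat.zero_le m) hml,
      Finset.sum_Ico_eq_sum_range, Finset.sum_Ico_eq_sum_range]
    simp
  have hak : a ≤ k - d := by omega
  have h1 : wgt B k P = (∑ t ∈ Finset.range a, f t) + (∑ t ∈ Finset.range d, f (a+t))
      + ∑ t ∈ Finset.range (k-b), f (b+t) := by
    unfold wgt
    rw [hsplit b k hbk f, hsplit a b (le_of_lt hab) f]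
  have h2 : wgt B (k-d) (fun t => P (if t ≤ a then t else t + d))
      = (∑ t ∈ Finset.range a, f t) + ∑ t ∈ Finset.range (k-b), f (b+t) := by
    unfold wgt
    set Q : ℕ → ι := fun t => P (if t ≤ a then t else t + d) with hQ
    have hQeq : ∀ t, a ≤ t → Q t = P (t + d) := by
      intro t ht
      by_cases h : t ≤ a
      · have : t = a := le_antisymm h ht
        subst this
        simp only [hQ, le_refl, if_pos]
        rw [hP]; congr 1; omega
      · simp only [hQ, if_neg h]
    rw [hsplit a (k-d) hak (fun t => B (Q t) (Q (t+1)))]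
    congr 1
    · apply Finset.sum_congr rfl
      intro t ht
      simp only [Finset.mem_range] at ht
      have e1 : Q t = P t := by simp only [hQ, if_pos (le_of_lt ht)]
      have e2 : Q (t+1) = P (t+1) := by simp only [hQ, if_pos (Nat.succ_le_of_lt ht)]
      rw [e1, e2]
    · have hkd : k - d - a = k - b := by omega
      rw [hkd]
      apply Finset.sum_congr rfl
      intro t ht
      have e1 : Q (a+t) = P (a+t+d) := hQeq (a+t) (Nat.le_add_right a t)
      have e2 : Q (a+t+1) = P (a+t+1+d) := hQeq (a+t+1) (by omega)
      rw [e1, e2]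
      have : a + t + d = b + t := by omega
      rw [this]
      congr 2
      omega
  have h3 : wgt B d (fun t => P (a+t)) = ∑ t ∈ Finset.range d, f (a+t) := by
    unfold wgt
    apply Finset.sum_congr rfl
    intro t ht
    simp only [hf]
    rw [Nat.add_assoc a t 1]
  rw [h1, h2, h3]
  ring

end Walk

section Star
variable {ι : Type*} [Fintype ι] [DecidableEq ι] [Nonempty ι]

lemma zero_le_star_diag (B : ι → ι → ℝ) (i : ι) : 0 ≤ kleeneStar B i i := by
  unfold kleeneStar
  rw [if_pos rfl]
  exact le_max_left _ _

lemma star_le {B : ι → ι → ℝ} {i j : ι} {r : ℝ} (h0 : i = j → 0 ≤ r)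
    (hp : ∀ m : ℕ, mpPow1 B m i j ≤ r) : kleeneStar B i j ≤ r := by
  by_cases hij : i = j
  · subst hij
    unfold kleeneStar
    rw [if_pos rfl]
    refine max_le (h0 rfl) ?_
    rcases isEmpty_or_nonempty (Fin (Fintype.card ι - 1)) with he | hne
    · rw [Real.iSup_of_isEmpty]
      exact h0 rfl
    · exact ciSup_le fun m => hp m
  · unfold kleeneStar
    rw [if_neg hij]
    haveI : Nonempty (Fin (Fintype.card ι - 1)) := by
      have : Nontrivial ι := ⟨i, j, hij⟩
      have h2 : 2 ≤ Fintype.card ι := Fintype.one_lt_card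
      exact ⟨⟨0, by omega⟩⟩
    exact ciSup_le fun m => hp m

lemma pow_mem_star {B : ι → ι → ℝ} (m : ℕ) (hm : m < Fintype.card ι - 1) (i j : ι) :
    mpPow1 B m i j ≤ kleeneStar B i j := by
  haveI : Nonempty (Fin (Fintype.card ι - 1)) := ⟨⟨m, hm⟩⟩
  have h : mpPow1 B m i j ≤ ⨆ t : Fin (Fintype.card ι - 1), mpPow1 B (t : ℕ) i j :=
    le_fsup (fun t : Fin (Fintype.card ι - 1) => mpPow1 B (t : ℕ) i j) ⟨m, hm⟩
  by_cases hij : i = j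
  · subst hij
    unfold kleeneStar
    rw [if_pos rfl]
    exact h.trans (le_max_right _ _)
  · unfold kleeneStar
    rw [if_neg hij]
    exact h

variable {B : ι → ι → ℝ} {ε : ℝ}

/-- All closed walks have weight at most `k * ε`, given this for short closed walks. -/
lemma cyc_all (hc : ∀ k, 1 ≤ k → k ≤ Fintype.card ι → ∀ P : ℕ → ι, P 0 = P k →
      wgt B k P ≤ k * ε) :
    ∀ k, 1 ≤ k → ∀ P : ℕ → ι, P 0 = P k → wgt B k P ≤ k * ε := by
  intro k
  induction k using Nat.strong_induction_on with
  | _ k ih =>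
    intro hk1 P hP
    by_cases hk : k ≤ Fintype.card ι
    · exact hc k hk1 hk P hP
    · push_neg at hk
      obtain ⟨a', b', hne, heq⟩ := Fintype.exists_ne_map_eq_of_card_lt
        (fun t : Fin (Fintype.card ι + 1) => P t) (by simp)
      have hex : ∃ a b : ℕ, a < b ∧ b ≤ Fintype.card ι ∧ P a = P b := by
        rcases lt_trichotomy (a' : ℕ) (b' : ℕ) with h | h | h
        · exact ⟨a', b', h, Nat.le_of_lt_succ b'.isLt, heq⟩
        · exact absurd (Fin.ext h) hne
        · exact ⟨b', a', h, Nat.le_of_lt_succ a'.isLt, heq.symm⟩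
      obtain ⟨a, b, hab, hbc, hPab⟩ := hex
      have hbk : b ≤ k := by omega
      have hsp := wgt_splice B k a b hab hbk P hPab
      set d := b - a with hd
      set Q : ℕ → ι := fun t => P (if t ≤ a then t else t + d) with hQdef
      have hak : a < k - d := by omega
      have hQ0 : Q 0 = P 0 := by simp [hQdef]
      have hQl : Q (k - d) = P k := by
        simp only [hQdef, if_neg (by omega : ¬ (k - d ≤ a))]
        congr 1
        omega
      have hcyc : wgt B d (fun t => P (a + t)) ≤ d * ε := by
        refine hc d (by omega) (by omega) _ ?_
        show P (a + 0) = P (a + d)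
        rw [Nat.add_zero, hPab]
        congr 1
        omega
      have hrest : wgt B (k - d) Q ≤ (k - d : ℕ) * ε := by
        refine ih (k - d) (by omega) (by omega) Q ?_
        rw [hQ0, hQl, hP]
      have hcast : ((k - d : ℕ) : ℝ) = (k : ℝ) - (d : ℝ) := by
        rw [Nat.cast_sub (by omega)]
      rw [hsp]
      rw [hcast] at hrest
      have hdk : (d : ℝ) ≤ (k : ℝ) := by exact_mod_cast (by omega : d ≤ k)
      linarith

lemma walk_le_star (hε : ε ≤ 0)
    (hc : ∀ k, 1 ≤ k → ∀ P : ℕ → ι, P 0 = P k → wgt B k P ≤ k * ε) :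
    ∀ s, 1 ≤ s → ∀ P : ℕ → ι, wgt B s P ≤ kleeneStar B (P 0) (P s) := by
  intro s
  induction s using Nat.strong_induction_on with
  | _ s ih =>
    intro hs1 P
    by_cases hs : s < Fintype.card ι
    · obtain ⟨s', rfl⟩ : ∃ s', s = s' + 1 := ⟨s - 1, by omega⟩
      exact (wgt_le_pow B s' P).trans (pow_mem_star s' (by omega) _ _)
    · push_neg at hs
      obtain ⟨a', b', hne, heq⟩ := Fintype.exists_ne_map_eq_of_card_lt
        (fun t : Fin (Fintype.card ι + 1) => P t) (by simp)
      have hex : ∃ a b : ℕ, a < b ∧ b ≤ Fintype.card ι ∧ P a = P b := by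
        rcases lt_trichotomy (a' : ℕ) (b' : ℕ) with h | h | h
        · exact ⟨a', b', h, Nat.le_of_lt_succ b'.isLt, heq⟩
        · exact absurd (Fin.ext h) hne
        · exact ⟨b', a', h, Nat.le_of_lt_succ a'.isLt, heq.symm⟩
      obtain ⟨a, b, hab, hbc, hPab⟩ := hex
      have hbk : b ≤ s := le_trans hbc hs
      have hsp := wgt_splice B s a b hab hbk P hPab
      set d := b - a with hd
      set Q : ℕ → ι := fun t => P (if t ≤ a then t else t + d) with hQdef
      have hQ0 : Q 0 = P 0 := by simp [hQdef]
      have hak : a ≤ s - d := by omega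
      have hQl : Q (s - d) = P s := by
        by_cases h' : s - d ≤ a
        · have ha' : s - d = a := le_antisymm h' hak
          have hbs : b = s := by omega
          simp only [hQdef, ha', if_pos (le_refl a)]
          rw [hPab, hbs]
        · simp only [hQdef, if_neg h']
          congr 1
          omega
      have hcyc : wgt B d (fun t => P (a + t)) ≤ d * ε := by
        refine hc d (by omega) _ ?_
        show P (a + 0) = P (a + d)
        rw [Nat.add_zero, hPab]
        congr 1
        omega
      have hcyc0 : wgt B d (fun t => P (a + t)) ≤ 0 :=
        hcyc.trans (mul_nonpos_of_nonneg_of_nonpos (by positivity) hε)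
      by_cases hsd : s - d = 0
      · -- whole walk is a cycle
        have hPs : P 0 = P s := by rw [← hQ0, ← hQl, hsd]
        rw [hsp, hsd]
        have : wgt B 0 Q = 0 := by simp [wgt]
        rw [this, hPs]
        have := zero_le_star_diag B (P s)
        linarith
      · have hr := ih (s - d) (by omega) (by omega) Q
        rw [hQ0, hQl] at hr
        rw [hsp]
        linarith

lemma pow_le_star (hε : ε ≤ 0)
    (hc : ∀ k, 1 ≤ k → ∀ P : ℕ → ι, P 0 = P k → wgt B k P ≤ k * ε)
    (m : ℕ) (i j : ι) : mpPow1 B m i j ≤ kleeneStar B i j := by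
  obtain ⟨P, hP0, hPl, hPw⟩ := pow_eq_wgt B m i j
  rw [hPw, ← hP0, ← hPl]
  exact walk_le_star hε hc (m + 1) (by omega) P

lemma walk_bound (hε : ε ≤ 0) (hent : ∀ i j, B i j ≤ 1)
    (hc : ∀ k, 1 ≤ k → ∀ P : ℕ → ι, P 0 = P k → wgt B k P ≤ k * ε) :
    ∀ s, ∀ P : ℕ → ι, wgt B s P ≤ (Fintype.card ι : ℝ) * (1 - ε) + s * ε := by
  intro s
  induction s using Nat.strong_induction_on with
  | _ s ih =>
    intro P
    by_cases hs : s ≤ Fintype.card ι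
    · have h1 : wgt B s P ≤ (s : ℝ) := by
        unfold wgt
        calc ∑ t ∈ Finset.range s, B (P t) (P (t+1)) ≤ ∑ t ∈ Finset.range s, (1:ℝ) :=
              Finset.sum_le_sum fun t _ => hent _ _
          _ = (s : ℝ) := by simp
      have hcs : (s : ℝ) ≤ (Fintype.card ι : ℝ) := by exact_mod_cast hs
      nlinarith [hcs, hε]
    · push_neg at hs
      obtain ⟨a', b', hne, heq⟩ := Fintype.exists_ne_map_eq_of_card_lt
        (fun t : Fin (Fintype.card ι + 1) => P t) (by simp)
      have hex : ∃ a b : ℕ, a < b ∧ b ≤ Fintype.card ι ∧ P a = P b := by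
        rcases lt_trichotomy (a' : ℕ) (b' : ℕ) with h | h | h
        · exact ⟨a', b', h, Nat.le_of_lt_succ b'.isLt, heq⟩
        · exact absurd (Fin.ext h) hne
        · exact ⟨b', a', h, Nat.le_of_lt_succ a'.isLt, heq.symm⟩
      obtain ⟨a, b, hab, hbc, hPab⟩ := hex
      have hbk : b ≤ s := by omega
      have hsp := wgt_splice B s a b hab hbk P hPab
      set d := b - a with hd
      have hcyc : wgt B d (fun t => P (a + t)) ≤ d * ε := by
        refine hc d (by omega) _ ?_
        show P (a + 0) = P (a + d)
        rw [Nat.add_zero, hPab]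
        congr 1
        omega
      have hr := ih (s - d) (by omega) (fun t => P (if t ≤ a then t else t + d))
      have hcast : ((s - d : ℕ) : ℝ) = (s : ℝ) - (d : ℝ) := by
        rw [Nat.cast_sub (by omega)]
      rw [hcast] at hr
      rw [hsp]
      linarith

end Star

section Fix
variable {ι : Type*} [Fintype ι] [DecidableEq ι] [Nonempty ι]
variable {B : ι → ι → ℝ} {ε : ℝ}

lemma pow_bound (hε : ε ≤ 0) (hent : ∀ i j, B i j ≤ 1)
    (hc : ∀ k, 1 ≤ k → ∀ P : ℕ → ι, P 0 = P k → wgt B k P ≤ k * ε)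
    (m : ℕ) (i j : ι) :
    mpPow1 B m i j ≤ (Fintype.card ι : ℝ) * (1 - ε) + (m + 1) * ε := by
  obtain ⟨P, hP0, hPl, hPw⟩ := pow_eq_wgt B m i j
  have := walk_bound hε hent hc (m + 1) P
  rw [hPw]
  calc wgt B (m+1) P ≤ (Fintype.card ι : ℝ) * (1 - ε) + ((m+1 : ℕ) : ℝ) * ε := this
    _ = (Fintype.card ι : ℝ) * (1 - ε) + ((m : ℝ) + 1) * ε := by push_cast; ring

lemma star_add_entry_le (hε : ε ≤ 0)
    (hc : ∀ k, 1 ≤ k → ∀ P : ℕ → ι, P 0 = P k → wgt B k P ≤ k * ε)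
    (i k j : ι) : B i k + kleeneStar B k j ≤ kleeneStar B i j := by
  have h1 : kleeneStar B k j ≤ kleeneStar B i j - B i k := by
    refine star_le (fun hkj => ?_) (fun m => ?_)
    · subst hkj
      have h4 := pow_le_star hε hc 0 i k
      have h0 : mpPow1 B 0 i k = B i k := rfl
      rw [h0] at h4
      linarith
    · have h2 : B i k + mpPow1 B m k j ≤ mpPow1 B (m+1) i j :=
        le_fsup (fun t => B i t + mpPow1 B m t j) k
      have h3 := pow_le_star hε hc (m+1) i j
      linarith
  linarith

lemma star_mul_ge_c {c : ι → ℝ} (i : ι) : c i ≤ mpMulVec (kleeneStar B) c i := by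
  have h1 := zero_le_star_diag B i
  have h2 := le_fsup (fun k => kleeneStar B i k + c k) i
  unfold mpMulVec
  linarith

/-- Uniqueness: any solution of `x = (B ⊗ x) ⊕ c` equals `B* ⊗ c`. -/
lemma fix_unique (hε : ε < 0) (hent : ∀ i j, B i j ≤ 1)
    (hc : ∀ k, 1 ≤ k → ∀ P : ℕ → ι, P 0 = P k → wgt B k P ≤ k * ε)
    {c x : ι → ℝ} (hcx : ∀ i, max (mpMulVec B x i) (c i) = x i)
    (hc0 : ∀ i, 0 ≤ c i) (hx1 : ∀ i, x i ≤ 1) :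
    ∀ i, x i = mpMulVec (kleeneStar B) c i := by
  have hBx : ∀ i, mpMulVec B x i ≤ x i := fun i => (le_max_left _ _).trans (hcx i).le
  have hcle : ∀ i, c i ≤ x i := fun i => (le_max_right _ _).trans (hcx i).le
  have hpow : ∀ m i, mpMulVec (mpPow1 B m) c i ≤ x i := by
    intro m
    induction m with
    | zero => exact fun i => (mpMulVec_mono B hcle i).trans (hBx i)
    | succ m ih =>
      intro i
      rw [show mpPow1 B (m+1) = mpMul B (mpPow1 B m) from rfl, mpMulVec_mpMul]
      exact (mpMulVec_mono B ih i).trans (hBx i)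
  intro i
  apply le_antisymm
  · -- x ≤ star ⊗ c
    have hup : ∀ m i, x i ≤ max (mpMulVec (mpPow1 B m) x i) (mpMulVec (kleeneStar B) c i) := by
      intro m
      induction m with
      | zero =>
        intro i
        rw [← hcx i]
        exact max_le_max le_rfl (star_mul_ge_c i)
      | succ m ih =>
        intro i
        refine (ih i).trans (max_le ?_ (le_max_right _ _))
        have hxeq : x = fun j => max (mpMulVec B x j) (c j) := funext fun j => (hcx j).symm
        have h1 : mpMulVec (mpPow1 B m) x i
            = max (mpMulVec (mpPow1 B m) (mpMulVec B x) i) (mpMulVec (mpPow1 B m) c i) := by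
          conv_lhs => rw [hxeq]
          exact mpMulVec_max _ _ _ i
        have h2 : mpMulVec (mpPow1 B m) (mpMulVec B x) i = mpMulVec (mpPow1 B (m+1)) x i := by
          rw [← mpMulVec_mpMul]
          have hcomm : ∀ u v, mpMul (mpPow1 B m) B u v = mpMul B (mpPow1 B m) u v :=
            fun u v => (mpPow1_comm B m u v).symm
          have : mpMul (mpPow1 B m) B = mpPow1 B (m+1) := by
            funext u v
            exact hcomm u v
          rw [this]
        have h3 : mpMulVec (mpPow1 B m) c i ≤ mpMulVec (kleeneStar B) c i :=
          mpMulVec_mono_mat (fun u v => pow_le_star hε.le hc m u v) c i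
        rw [h1, h2]
        exact max_le (le_max_left _ _) (h3.trans (le_max_right _ _))
    obtain ⟨N, hN⟩ : ∃ N : ℕ, (Fintype.card ι : ℝ) * (1 - ε) + (N + 1) * ε + 1 ≤ 0 := by
      obtain ⟨N, hN⟩ := exists_nat_gt (((Fintype.card ι : ℝ) * (1 - ε) + 1) / (-ε))
      refine ⟨N, ?_⟩
      have hε' : (0:ℝ) < -ε := by linarith
      rw [div_lt_iff₀ hε'] at hN
      nlinarith
    have hvan : mpMulVec (mpPow1 B N) x i ≤ 0 := by
      refine fsup_le fun k => ?_
      have := pow_bound hε.le hent hc N i k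
      have := hx1 k
      linarith
    have h0le : (0:ℝ) ≤ mpMulVec (kleeneStar B) c i := (hc0 i).trans (star_mul_ge_c i)
    exact (hup N i).trans (max_le (hvan.trans h0le) le_rfl)
  · -- star ⊗ c ≤ x
    refine fsup_le fun k => ?_
    have hsl : kleeneStar B i k ≤ x i - c k := by
      refine star_le (fun hik => ?_) (fun m => ?_)
      · subst hik
        have := hcle i
        linarith
      · have h2 : mpPow1 B m i k + c k ≤ mpMulVec (mpPow1 B m) c i :=
          le_fsup (fun t => mpPow1 B m i t + c t) k
        have h3 := hpow m i
        linarith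
    linarith

/-- Existence: `x := B* ⊗ c` solves `x = (B ⊗ x) ⊕ c`. -/
lemma fix_exists (hε : ε ≤ 0)
    (hc : ∀ k, 1 ≤ k → ∀ P : ℕ → ι, P 0 = P k → wgt B k P ≤ k * ε)
    {c x : ι → ℝ} (hxdef : ∀ i, x i = mpMulVec (kleeneStar B) c i) :
    ∀ i, max (mpMulVec B x i) (c i) = x i := by
  have hcle : ∀ i, c i ≤ x i := fun i => (star_mul_ge_c i).trans (hxdef i).ge
  have hstx : ∀ t k', kleeneStar B t k' + c k' ≤ x t := by
    intro t k'
    rw [hxdef t]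
    exact le_fsup (fun u => kleeneStar B t u + c u) k'
  have hBxle : ∀ i, mpMulVec B x i ≤ x i := by
    intro i
    refine fsup_le fun k => ?_
    rw [hxdef k]
    show B i k + mpMulVec (kleeneStar B) c k ≤ x i
    rw [show mpMulVec (kleeneStar B) c k = ⨆ k', (kleeneStar B k k' + c k') from rfl, add_fsup]
    refine fsup_le fun k' => ?_
    have h1 := star_add_entry_le hε hc i k k'
    have h2 := hstx i k'
    linarith
  intro i
  refine le_antisymm (max_le (hBxle i) (hcle i)) ?_
  rw [hxdef i]
  refine fsup_le fun k' => ?_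
  have hsl : kleeneStar B i k' ≤ max (mpMulVec B x i) (c i) - c k' := by
    refine star_le (fun hik => ?_) (fun m => ?_)
    · subst hik
      have := le_max_right (mpMulVec B x i) (c i)
      linarith
    · -- mpPow1 B m i k' ≤ max ... - c k'
      match m with
      | 0 =>
        have h1 : B i k' + x k' ≤ mpMulVec B x i := le_fsup (fun t => B i t + x t) k'
        have h2 := hcle k'
        have := le_max_left (mpMulVec B x i) (c i)
        show B i k' ≤ _
        linarith
      | (m+1) =>
        show mpMul B (mpPow1 B m) i k' ≤ _
        unfold mpMul
        refine fsup_le fun t => ?_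
        have h1 := pow_le_star hε hc m t k'
        have h2 := hstx t k'
        have h3 : B i t + x t ≤ mpMulVec B x i := le_fsup (fun u => B i u + x u) t
        have := le_max_left (mpMulVec B x i) (c i)
        linarith
  linarith

end Fix

lemma maxmax0 (a b : ℝ) : max (max 0 a) (max 0 b) = max 0 (max a b) := by
  rw [max_max_max_comm, max_self]

lemma maxmax1 (a b : ℝ) : max a (max b 0) = max 0 (max a b) := by
  rw [← max_assoc, max_comm (max a b) 0]

lemma fsup_split {n : ℕ} {K L : Finset (Fin n)} [Nonempty {x // x ∈ K}] [Nonempty {x // x ∈ L}]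
    (hcover : K ∪ L = Finset.univ) (f : Fin n → ℝ) :
    (⨆ i, f i) = max (⨆ k : {x // x ∈ K}, f k.1) (⨆ j : {x // x ∈ L}, f j.1) := by
  haveI : Nonempty (Fin n) := ⟨(Classical.arbitrary {x // x ∈ K}).1⟩
  apply le_antisymm
  · refine fsup_le fun i => ?_
    have hi : i ∈ K ∪ L := hcover ▸ Finset.mem_univ i
    rcases Finset.mem_union.mp hi with h | h
    · exact le_trans (le_fsup (fun k : {x // x ∈ K} => f k.1) ⟨i, h⟩) (le_max_left _ _)
    · exact le_trans (le_fsup (fun j : {x // x ∈ L} => f j.1) ⟨i, h⟩) (le_max_right _ _)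
  · exact max_le (fsup_le fun k => le_fsup f k.1) (fsup_le fun j => le_fsup f j.1)

/-- explicit description of the `(K,L)` Łukasiewicz eigenvectors via the tropical
Schur complement `S = A^{(1)}_{LL} ⊕ A^{(1)}_{LK} ⊗ (A^{(λ)}_{KK})* ⊗ A^{(λ)}_{KL}`. -/
theorem stmt12 {n : ℕ} (A : Fin n → Fin n → ℝ) (hA : ∀ i j, A i j ∈ Set.Icc (0 : ℝ) 1)
    (lam : ℝ) (hlam0 : 0 < lam) (hlam1 : lam < 1)
    (K L : Finset (Fin n)) (hK : K.Nonempty) (hL : L.Nonempty)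
    (hdisj : Disjoint K L) (hcover : K ∪ L = Finset.univ)
    (hrho : maxCycleMean (fun i j : ↥K => A i.1 j.1) < lam)
    (hLK : ∀ l ∈ L, ∀ k k' : ↥K,
      A l k.1 - lam + kleeneStar (fun i j : ↥K => A i.1 j.1 - lam) k k' ≤ 0)
    (S : ↥L → ↥L → ℝ)
    (hS : S = fun i j => max (A i.1 j.1 - 1)
      (mpMul (fun (i : ↥L) (k : ↥K) => A i.1 k.1 - 1)
        (mpMul (kleeneStar (fun (i j : ↥K) => A i.1 j.1 - lam))
          (fun (k : ↥K) (j : ↥L) => A k.1 j.1 - lam)) i j))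
    (x : Fin n → ℝ) (hx : ∀ i, x i ∈ Set.Icc (0 : ℝ) 1) :
    ((∀ i, lukMulVec A x i = lukSMul lam x i) ∧
        (∀ i ∈ K, 1 - lam ≤ x i) ∧ (∀ i ∈ L, x i ≤ 1 - lam)) ↔
      ((∀ j : ↥L, 0 ≤ x j.1 ∧ x j.1 ≤ min (1 - lam) (⨅ i : ↥L, -(S i j))) ∧
        ∀ k : ↥K, x k.1 = ⨆ k' : ↥K,
          (kleeneStar (fun (i j : ↥K) => A i.1 j.1 - lam) k k' +
            max (⨆ j : ↥L, (A k'.1 j.1 - lam + x j.1)) (1 - lam))) := by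
  subst hS
  haveI hKn : Nonempty {z // z ∈ K} := ⟨⟨hK.choose, hK.choose_spec⟩⟩
  haveI hLn : Nonempty {z // z ∈ L} := ⟨⟨hL.choose, hL.choose_spec⟩⟩
  haveI : Nonempty (Fin n) := ⟨hK.choose⟩
  have hu : (0:ℝ) < 1 - lam := by linarith
  set B : {z // z ∈ K} → {z // z ∈ K} → ℝ := fun i j => A i.1 j.1 - lam with hBdef
  set ρ := maxCycleMean (fun i j : {z // z ∈ K} => A i.1 j.1) with hρdef
  set c : {z // z ∈ K} → ℝ :=
    fun k => max (⨆ j : {z // z ∈ L}, (A k.1 j.1 - lam + x j.1)) (1 - lam) with hcdef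
  -- the cycle bound for B
  have hcycsmall : ∀ k, 1 ≤ k → k ≤ Fintype.card {z // z ∈ K} →
      ∀ P : ℕ → {z // z ∈ K}, P 0 = P k → wgt B k P ≤ k * (ρ - lam) := by
    intro k hk1 hkc P hP
    set Ar : {z // z ∈ K} → {z // z ∈ K} → ℝ := fun i j => A i.1 j.1 with hAr
    have hwalk : walkWeight Ar k (fun u : Fin (k+1) => P u.1) = wgt Ar k P := by
      unfold walkWeight wgt
      rw [← Fin.sum_univ_eq_sum_range (fun t : ℕ => Ar (P t) (P (t+1))) k]
      refine Finset.sum_congr rfl fun t _ => ?_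
      simp [Fin.coe_castSucc, Fin.val_succ]
    have hbdd : BddAbove { r : ℝ | ∃ m, 1 ≤ m ∧ m ≤ Fintype.card {z // z ∈ K} ∧
        ∃ P : Fin (m + 1) → {z // z ∈ K}, P 0 = P (Fin.last m) ∧
          r = walkWeight Ar m P / (m : ℝ) } := by
      refine ⟨1, fun r hr => ?_⟩
      obtain ⟨m, hm1, _, Q, _, hrw⟩ := hr
      have hW : walkWeight Ar m Q ≤ (m : ℝ) := by
        unfold walkWeight
        calc ∑ t : Fin m, Ar (Q t.castSucc) (Q t.succ) ≤ ∑ _t : Fin m, (1:ℝ) :=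
              Finset.sum_le_sum fun t _ => (hA _ _).2
          _ = (m : ℝ) := by simp
      have hm0 : (0:ℝ) < m := by exact_mod_cast hm1
      rw [hrw, div_le_one hm0]
      exact hW
    have hmem : wgt Ar k P / (k : ℝ) ∈ { r : ℝ | ∃ m, 1 ≤ m ∧ m ≤ Fintype.card {z // z ∈ K} ∧
        ∃ P : Fin (m + 1) → {z // z ∈ K}, P 0 = P (Fin.last m) ∧
          r = walkWeight Ar m P / (m : ℝ) } := by
      refine ⟨k, hk1, hkc, fun u : Fin (k+1) => P u.1, ?_, by rw [hwalk]⟩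
      show P ((0 : Fin (k+1)) : ℕ) = P ((Fin.last k : Fin (k+1)) : ℕ)
      simp only [Fin.val_zero, Fin.val_last]
      exact hP
    have hle : wgt Ar k P / (k : ℝ) ≤ ρ := le_csSup hbdd hmem
    have hk0 : (0:ℝ) < (k : ℝ) := by exact_mod_cast hk1
    rw [div_le_iff₀ hk0] at hle
    have hwB : wgt B k P = wgt Ar k P - k * lam := by
      unfold wgt
      have he : ∀ t, B (P t) (P (t+1)) = Ar (P t) (P (t+1)) - lam := fun t => rfl
      simp only [he]
      rw [Finset.sum_sub_distrib, Finset.sum_const, Finset.card_range, nsmul_eq_mul]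
    rw [hwB]
    nlinarith
  have hεlt : ρ - lam < 0 := by linarith [hrho]
  have hent : ∀ i j, B i j ≤ 1 := fun i j => by
    have := (hA i.1 j.1).2
    show A i.1 j.1 - lam ≤ 1
    linarith
  have hcyc := cyc_all hcycsmall
  have hc1 : ∀ k, 1 - lam ≤ c k := fun k => le_max_right _ _
  have hc0 : ∀ k, 0 ≤ c k := fun k => le_trans hu.le (hc1 k)
  -- pointwise rewriting of the eigenproblem, on K
  have hlukK : (∀ k : {z // z ∈ K}, 1 - lam ≤ x k.1) → ∀ k : {z // z ∈ K},
      (lukMulVec A x k.1 = lukSMul lam x k.1) ↔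
        (max (mpMulVec B (fun t : {z // z ∈ K} => x t.1) k) (c k) = x k.1) := by
    intro hxK k
    set SK := ⨆ t : {z // z ∈ K}, (A k.1 t.1 + x t.1 - 1) with hSK
    set SL := ⨆ j : {z // z ∈ L}, (A k.1 j.1 + x j.1 - 1) with hSL
    have h1 : lukMulVec A x k.1 = max 0 (max SK SL) := by
      unfold lukMulVec
      rw [fsup_split hcover (fun j => max 0 (A k.1 j + x j - 1)), max0_fsup, max0_fsup, maxmax0]
    have h2 : lukSMul lam x k.1 = x k.1 - (1 - lam) := by
      unfold lukSMul
      rw [max_eq_right (by linarith [hxK k] : (0:ℝ) ≤ lam + x k.1 - 1)]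
      ring
    have h3 : mpMulVec B (fun t : {z // z ∈ K} => x t.1) k = SK + (1 - lam) := by
      rw [hSK, fsup_add]
      exact iSup_congr fun t => by show A k.1 t.1 - lam + x t.1 = _; ring
    have h4 : c k = max SL 0 + (1 - lam) := by
      simp only [hcdef]
      have e1 : (⨆ j : {z // z ∈ L}, (A k.1 j.1 - lam + x j.1)) = SL + (1 - lam) := by
        rw [hSL, fsup_add]
        exact iSup_congr fun j => by ring
      rw [e1]
      rw [show (1 : ℝ) - lam = 0 + (1 - lam) from (zero_add _).symm, ← max_add_add_right]
      simp
    have h5 : max (SK + (1-lam)) (max SL 0 + (1-lam)) = max 0 (max SK SL) + (1-lam) := by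
      rw [max_add_add_right, maxmax1]
    rw [h1, h2, h3, h4, h5]
    constructor <;> intro h <;> linarith
  -- pointwise rewriting of the eigenproblem, on L
  have hlukL : (∀ j : {z // z ∈ L}, x j.1 ≤ 1 - lam) → ∀ l : {z // z ∈ L},
      (lukMulVec A x l.1 = lukSMul lam x l.1) ↔
        ((∀ k : {z // z ∈ K}, A l.1 k.1 + x k.1 ≤ 1) ∧
          (∀ j : {z // z ∈ L}, A l.1 j.1 + x j.1 ≤ 1)) := by
    intro hxL l
    have h2 : lukSMul lam x l.1 = 0 := max_eq_left (by linarith [hxL l])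
    have h1 : lukMulVec A x l.1 = max 0 (⨆ i : Fin n, (A l.1 i + x i - 1)) := max0_fsup _
    rw [h1, h2, max_eq_left_iff]
    constructor
    · intro h
      constructor
      · intro k
        have := (le_fsup (fun i => A l.1 i + x i - 1) k.1).trans h
        linarith
      · intro j
        have := (le_fsup (fun i => A l.1 i + x i - 1) j.1).trans h
        linarith
    · rintro ⟨hk, hj⟩
      refine fsup_le fun i => ?_
      have hi : i ∈ K ∪ L := hcover ▸ Finset.mem_univ i
      rcases Finset.mem_union.mp hi with h | h
      · have := hk ⟨i, h⟩; linarith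
      · have := hj ⟨i, h⟩; linarith
  constructor
  · rintro ⟨heig, hxK, hxL⟩
    have hxK' : ∀ k : {z // z ∈ K}, 1 - lam ≤ x k.1 := fun k => hxK k.1 k.2
    have hxL' : ∀ j : {z // z ∈ L}, x j.1 ≤ 1 - lam := fun j => hxL j.1 j.2
    have hEqK : ∀ k : {z // z ∈ K},
        max (mpMulVec B (fun t : {z // z ∈ K} => x t.1) k) (c k) = x k.1 :=
      fun k => (hlukK hxK' k).mp (heig k.1)
    have hEqL : ∀ l : {z // z ∈ L},
        (∀ k : {z // z ∈ K}, A l.1 k.1 + x k.1 ≤ 1) ∧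
          (∀ j : {z // z ∈ L}, A l.1 j.1 + x j.1 ≤ 1) :=
      fun l => (hlukL hxL' l).mp (heig l.1)
    have hfix : ∀ k : {z // z ∈ K}, x k.1 = mpMulVec (kleeneStar B) c k :=
      fix_unique hεlt hent hcyc hEqK hc0 (fun k => (hx k.1).2)
    refine ⟨?_, fun k => hfix k⟩
    intro j
    refine ⟨(hx j.1).1, le_min (hxL' j) ?_⟩
    refine le_ciInf fun l => ?_
    rw [le_neg]
    refine max_le (by have := (hEqL l).2 j; linarith) ?_
    refine fsup_le fun k => ?_
    have hin : mpMul (kleeneStar B)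
        (fun (t : {z // z ∈ K}) (u : {z // z ∈ L}) => A t.1 u.1 - lam) k j
          ≤ (1 : ℝ) - A l.1 k.1 - x j.1 := by
      refine fsup_le fun k' => ?_
      have e1 : kleeneStar B k k' + c k' ≤ x k.1 := by
        rw [hfix k]
        exact le_fsup (fun t => kleeneStar B k t + c t) k'
      have e2 : A k'.1 j.1 - lam + x j.1 ≤ c k' := by
        refine le_trans (le_fsup (fun t : {z // z ∈ L} => A k'.1 t.1 - lam + x t.1) j) ?_
        simp only [hcdef]
        exact le_max_left _ _
      have e3 := (hEqL l).1 k
      show kleeneStar B k k' + (A k'.1 j.1 - lam) ≤ _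
      linarith
    show A l.1 k.1 - 1 + mpMul (kleeneStar B)
        (fun (t : {z // z ∈ K}) (u : {z // z ∈ L}) => A t.1 u.1 - lam) k j ≤ -x j.1
    linarith
  · rintro ⟨hQ1, hQ2⟩
    have hxL' : ∀ j : {z // z ∈ L}, x j.1 ≤ 1 - lam :=
      fun j => (hQ1 j).2.trans (min_le_left _ _)
    have hSb : ∀ (j l : {z // z ∈ L}), x j.1 ≤
        -(max (A l.1 j.1 - 1)
          (mpMul (fun (i : {z // z ∈ L}) (t : {z // z ∈ K}) => A i.1 t.1 - 1)
            (mpMul (kleeneStar B)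
              (fun (t : {z // z ∈ K}) (u : {z // z ∈ L}) => A t.1 u.1 - lam)) l j)) := by
      intro j l
      refine ((hQ1 j).2.trans (min_le_right _ _)).trans ?_
      exact ciInf_le (Set.Finite.bddBelow (Set.finite_range _)) l
    have hfix : ∀ k : {z // z ∈ K}, x k.1 = mpMulVec (kleeneStar B) c k := fun k => hQ2 k
    have hxK' : ∀ k : {z // z ∈ K}, 1 - lam ≤ x k.1 := by
      intro k
      rw [hfix k]
      have e1 : kleeneStar B k k + c k ≤ mpMulVec (kleeneStar B) c k :=
        le_fsup (fun t => kleeneStar B k t + c t) k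
      have e2 := zero_le_star_diag B k
      have e3 := hc1 k
      linarith
    have hEqK : ∀ k : {z // z ∈ K},
        max (mpMulVec B (fun t : {z // z ∈ K} => x t.1) k) (c k) = x k.1 :=
      fix_exists hεlt.le hcyc hfix
    have hkey : ∀ (l : {z // z ∈ L}) (k k' : {z // z ∈ K}),
        A l.1 k.1 + (kleeneStar B k k' + c k') ≤ 1 := by
      intro l k k'
      have hck : c k' = max (⨆ t : {z // z ∈ L}, (A k'.1 t.1 - lam + x t.1)) (1 - lam) := by
        simp only [hcdef]
      have h5 : c k' ≤ 1 - A l.1 k.1 - kleeneStar B k k' := by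
        rw [hck]
        refine max_le ?_ (by have := hLK l.1 l.2 k k'; linarith)
        refine fsup_le fun t => ?_
        have m2 : kleeneStar B k k' + (A k'.1 t.1 - lam) ≤ mpMul (kleeneStar B)
            (fun (u : {z // z ∈ K}) (v : {z // z ∈ L}) => A u.1 v.1 - lam) k t :=
          le_fsup (fun u => kleeneStar B k u + (A u.1 t.1 - lam)) k'
        have m1 : (A l.1 k.1 - 1) + mpMul (kleeneStar B)
            (fun (u : {z // z ∈ K}) (v : {z // z ∈ L}) => A u.1 v.1 - lam) k t
              ≤ mpMul (fun (i : {z // z ∈ L}) (u : {z // z ∈ K}) => A i.1 u.1 - 1)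
                (mpMul (kleeneStar B)
                  (fun (u : {z // z ∈ K}) (v : {z // z ∈ L}) => A u.1 v.1 - lam)) l t :=
          le_fsup (fun u => (A l.1 u.1 - 1) + mpMul (kleeneStar B)
            (fun (u : {z // z ∈ K}) (v : {z // z ∈ L}) => A u.1 v.1 - lam) u t) k
        have m3 := hSb t l
        have m4 : mpMul (fun (i : {z // z ∈ L}) (u : {z // z ∈ K}) => A i.1 u.1 - 1)
            (mpMul (kleeneStar B)
              (fun (u : {z // z ∈ K}) (v : {z // z ∈ L}) => A u.1 v.1 - lam)) l t
            ≤ max (A l.1 t.1 - 1) _ := le_max_right _ _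
        linarith
      linarith
    have hEqL : ∀ l : {z // z ∈ L},
        (∀ k : {z // z ∈ K}, A l.1 k.1 + x k.1 ≤ 1) ∧
          (∀ j : {z // z ∈ L}, A l.1 j.1 + x j.1 ≤ 1) := by
      intro l
      constructor
      · intro k
        rw [hfix k]
        have : mpMulVec (kleeneStar B) c k ≤ 1 - A l.1 k.1 :=
          fsup_le fun k' => by have := hkey l k k'; linarith
        linarith
      · intro j
        have h1 := hSb j l
        have h2 : A l.1 j.1 - 1 ≤ max (A l.1 j.1 - 1)
            (mpMul (fun (i : {z // z ∈ L}) (t : {z // z ∈ K}) => A i.1 t.1 - 1)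
              (mpMul (kleeneStar B)
                (fun (t : {z // z ∈ K}) (u : {z // z ∈ L}) => A t.1 u.1 - lam)) l j) :=
          le_max_left _ _
        linarith
    refine ⟨?_, fun i hi => hxK' ⟨i, hi⟩, fun i hi => hxL' ⟨i, hi⟩⟩
    intro i
    have hi : i ∈ K ∪ L := hcover ▸ Finset.mem_univ i
    rcases Finset.mem_union.mp hi with h | h
    · exact (hlukK hxK' ⟨i, h⟩).mpr (hEqK ⟨i, h⟩)
    · exact (hlukL hxL' ⟨i, h⟩).mpr (hEqL ⟨i, h⟩)
end

section
/- Let A ∈ [0,1]^{n×n}, 0 < λ < 1, and let (K,L) be a partition of {1,…,n} into nonempty proper subsets. Then A has a (K,L)-Łukasiewicz eigenvector associated with λ if and only if (K,L) is a secure partition with respect to the weighted digraph D(A^(λ)). -/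
open Finset

section walkAux

variable {n : ℕ}

lemma ww_zero (B : Fin n → Fin n → ℝ) (P : Fin 1 → Fin n) : walkWeight B 0 P = 0 := by
  simp [walkWeight]

lemma ww_last (B : Fin n → Fin n → ℝ) (len : ℕ) (P : Fin (len + 2) → Fin n) :
    walkWeight B (len + 1) P
      = walkWeight B len (fun t => P t.castSucc)
        + B (P (Fin.last len).castSucc) (P (Fin.last (len + 1))) := by
  simp only [walkWeight, Fin.sum_univ_castSucc, Fin.succ_last, Fin.succ_castSucc]

lemma ww_head (B : Fin n → Fin n → ℝ) (len : ℕ) (P : Fin (len + 2) → Fin n) :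
    walkWeight B (len + 1) P = B (P 0) (P 1) + walkWeight B len (fun t => P t.succ) := by
  simp only [walkWeight, Fin.sum_univ_succ, Fin.castSucc_zero, Fin.succ_zero_eq_one,
    Fin.succ_castSucc]

lemma ww_cons (B : Fin n → Fin n → ℝ) (s : Fin n) (len : ℕ) (P : Fin (len + 1) → Fin n) :
    walkWeight B (len + 1) (Fin.cases s P) = B s (P 0) + walkWeight B len P := by
  rw [ww_head, ← Fin.succ_zero_eq_one]
  simp only [Fin.cases_zero, Fin.cases_succ]

end walkAux

/-- a `(K,L)` Łukasiewicz eigenvector associated with `λ ∈ (0,1)` exists iff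
`(K,L)` is a secure partition with respect to `D(A^{(λ)})`. -/
theorem stmt13 {n : ℕ} (A : Fin n → Fin n → ℝ) (hA : ∀ i j, A i j ∈ Set.Icc (0 : ℝ) 1)
    (lam : ℝ) (hlam0 : 0 < lam) (hlam1 : lam < 1)
    (K L : Finset (Fin n)) (hK : K.Nonempty) (hL : L.Nonempty)
    (hdisj : Disjoint K L) (hcover : K ∪ L = Finset.univ) :
    (∃ x : Fin n → ℝ, (∀ i, x i ∈ Set.Icc (0 : ℝ) 1) ∧
        (∀ i, lukMulVec A x i = lukSMul lam x i) ∧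
        (∀ i ∈ K, 1 - lam ≤ x i) ∧ (∀ i ∈ L, x i ≤ 1 - lam)) ↔
      SecurePartition (fun i j => A i j - lam) lam K L := by
  haveI : Nonempty (Fin n) := ⟨hK.choose⟩
  obtain ⟨l0, hl0⟩ := hL
  have hLne : L ≠ ∅ := Finset.nonempty_iff_ne_empty.mp ⟨l0, hl0⟩
  set B : Fin n → Fin n → ℝ := fun i j => A i j - lam with hBdef
  simp only [SecurePartition, if_neg hLne]
  have hmemKL : ∀ i : Fin n, i ∈ K ∨ i ∈ L := fun i =>
    Finset.mem_union.mp (hcover ▸ Finset.mem_univ i)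
  have hnKL : ∀ i ∈ L, i ∉ K := fun i hi => (Finset.disjoint_right.mp hdisj) hi
  constructor
  · rintro ⟨x, hx01, heq, hxK, hxL⟩ len P hP0 hPK'
    have key : ∀ i j, A i j + x j - 1 ≤ max 0 (lam + x i - 1) := by
      intro i j
      have h0 : max 0 (A i j + x j - 1) ≤ ⨆ k, max 0 (A i k + x k - 1) :=
        le_ciSup (f := fun k => max 0 (A i k + x k - 1)) (Finite.bddAbove_range _) j
      have h2 := heq i
      simp only [lukMulVec, lukSMul] at h2
      rw [h2] at h0
      exact le_trans (le_max_right _ _) h0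
    have hbK : ∀ i ∈ K, ∀ j, B i j ≤ x i - x j := by
      intro i hi j
      have h2 : max 0 (lam + x i - 1) = lam + x i - 1 :=
        max_eq_right (by have := hxK i hi; linarith)
      have h3 := key i j
      rw [h2] at h3
      simp only [hBdef]
      linarith
    have hbL : ∀ i ∈ L, ∀ j, B i j ≤ (1 - lam) - x j := by
      intro i hi j
      have h2 : max 0 (lam + x i - 1) = 0 :=
        max_eq_left (by have := hxL i hi; linarith)
      have h3 := key i j
      rw [h2] at h3
      simp only [hBdef]
      linarith
    have tel : ∀ m (P : Fin (m + 1) → Fin n), P 0 ∈ L →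
        (∀ t, t ≠ 0 → P t ∈ K) → walkWeight B m P ≤ (1 - lam) - x (P (Fin.last m)) := by
      intro m
      induction m with
      | zero =>
        intro P h0 _
        rw [ww_zero]
        have he : Fin.last 0 = (0 : Fin 1) := rfl
        rw [he]
        have := hxL _ h0
        linarith
      | succ m ih =>
        intro P h0 hK'
        rw [ww_last]
        by_cases hm : ((Fin.last m).castSucc : Fin (m + 2)) = 0
        · have hm0 : m = 0 := by
            have := congrArg Fin.val hm
            simpa using this
          subst hm0
          have hQ : walkWeight B 0 (fun t : Fin 1 => P t.castSucc) = 0 := ww_zero _ _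
          have h0' : P ((Fin.last 0).castSucc) ∈ L := by rw [hm]; exact h0
          have hedge := hbL _ h0' (P (Fin.last 1))
          rw [hQ]
          linarith
        · have hPc : P ((Fin.last m).castSucc) ∈ K := hK' _ hm
          have hQ0 : (fun t : Fin (m + 1) => P t.castSucc) 0 ∈ L := by simpa using h0
          have hQK : ∀ t : Fin (m + 1), t ≠ 0 →
              (fun t : Fin (m + 1) => P t.castSucc) t ∈ K := by
            intro t ht
            exact hK' t.castSucc (by simpa using ht)
          have h1 := ih _ hQ0 hQK
          have h2 := hbK _ hPc (P (Fin.last (m + 1)))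
          linarith
    cases len with
    | zero => rw [ww_zero]
    | succ m =>
      have h1 := tel _ P hP0 hPK'
      have hlast : P (Fin.last (m + 1)) ∈ K := by
        refine hPK' _ ?_
        intro h
        have := congrArg Fin.val h
        simp at this
      have := hxK _ hlast
      linarith
  · intro hS
    set W : Fin n → Set ℝ := fun i =>
      insert 0 {w | ∃ len, ∃ P : Fin (len + 1) → Fin n,
        P 0 = i ∧ (∀ t, P t ∈ K) ∧ walkWeight B len P = w} with hWdef
    set z : Fin n → ℝ := fun i => sSup (W i) with hzdef
    set x : Fin n → ℝ := fun j => if j ∈ K then (1 - lam) + z j else 0 with hxdef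
    have hmemW : ∀ (i : Fin n) (len : ℕ) (P : Fin (len + 1) → Fin n), P 0 = i →
        (∀ t, P t ∈ K) → walkWeight B len P ∈ W i := by
      intro i len P h1 h2
      rw [hWdef]
      exact Set.mem_insert_iff.mpr (Or.inr ⟨len, P, h1, h2, rfl⟩)
    have hzeroW : ∀ i : Fin n, (0 : ℝ) ∈ W i := by
      intro i; rw [hWdef]; exact Set.mem_insert _ _
    -- prepending a node of `L` and applying security
    have hkey : ∀ s ∈ L, ∀ j ∈ K, ∀ w ∈ W j, B s j + w ≤ 0 := by
      intro s hs j hj w hw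
      rw [hWdef] at hw
      rcases Set.mem_insert_iff.mp hw with rfl | ⟨len, P, hP0, hPmem, hPw⟩
      · have h1 := hS (0 + 1) (Fin.cases s (fun _ : Fin 1 => j)) (by simpa using hs) ?_
        · simp only [ww_cons, ww_zero, add_zero] at h1
          linarith
        · intro t ht
          rcases Fin.eq_zero_or_eq_succ t with rfl | ⟨u, rfl⟩
          · exact absurd rfl ht
          · simp only [Fin.cases_succ]; exact hj
      · have h1 := hS (len + 1) (Fin.cases s P) (by simpa using hs) ?_
        · rw [ww_cons, hP0, hPw] at h1
          exact h1
        · intro t ht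
          rcases Fin.eq_zero_or_eq_succ t with rfl | ⟨u, rfl⟩
          · exact absurd rfl ht
          · simp only [Fin.cases_succ]; exact hPmem u
    have hub : ∀ i : Fin n, ∀ w ∈ W i, w ≤ lam := by
      intro i w hw
      have hw' := hw
      rw [hWdef] at hw'
      rcases Set.mem_insert_iff.mp hw' with rfl | ⟨len, P, hP0, hPmem, hPw⟩
      · exact hlam0.le
      · have hiK : i ∈ K := hP0 ▸ hPmem 0
        have h1 := hkey l0 hl0 i hiK w hw
        have hA0 := (hA l0 i).1
        simp only [hBdef] at h1
        linarith
    have hne : ∀ i : Fin n, (W i).Nonempty := fun i => ⟨0, hzeroW i⟩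
    have hbdd : ∀ i : Fin n, BddAbove (W i) := fun i => ⟨lam, fun w hw => hub i w hw⟩
    have hz0 : ∀ i : Fin n, 0 ≤ z i := by
      intro i; rw [hzdef]; exact le_csSup (hbdd i) (hzeroW i)
    have hzlam : ∀ i : Fin n, z i ≤ lam := by
      intro i; rw [hzdef]; exact csSup_le (hne i) (hub i)
    have hstep : ∀ i ∈ K, ∀ j ∈ K, B i j + z j ≤ z i := by
      intro i hi j hj
      have hmem : ∀ w ∈ W j, B i j + w ∈ W i := by
        intro w hw
        rw [hWdef] at hw
        rcases Set.mem_insert_iff.mp hw with rfl | ⟨len, P, hP0, hPmem, hPw⟩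
        · have m1 := hmemW i (0 + 1) (Fin.cases i (fun _ : Fin 1 => j)) (by simp) ?_
          · simpa only [ww_cons, ww_zero, add_zero, add_zero] using m1
          · intro t
            rcases Fin.eq_zero_or_eq_succ t with rfl | ⟨u, rfl⟩
            · simpa using hi
            · simp only [Fin.cases_succ]; exact hj
        · have m1 := hmemW i (len + 1) (Fin.cases i P) (by simp) ?_
          · rwa [ww_cons, hP0, hPw] at m1
          · intro t
            rcases Fin.eq_zero_or_eq_succ t with rfl | ⟨u, rfl⟩
            · simpa using hi
            · simp only [Fin.cases_succ]; exact hPmem u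
      have h1 : z j ≤ z i - B i j := by
        rw [hzdef]
        refine csSup_le (hne j) fun w hw => ?_
        have h2 : B i j + w ≤ z i := by
          rw [hzdef]; exact le_csSup (hbdd i) (hmem w hw)
        linarith
      linarith
    have hintoL : ∀ i ∈ L, ∀ j ∈ K, B i j + z j ≤ 0 := by
      intro i hi j hj
      have h1 : z j ≤ -B i j := by
        rw [hzdef]
        refine csSup_le (hne j) fun w hw => ?_
        have := hkey i hi j hj w hw
        linarith
      linarith
    have hxval_K : ∀ j ∈ K, x j = (1 - lam) + z j := by
      intro j hj; rw [hxdef]; simp only; rw [if_pos hj]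
    have hxval_N : ∀ j ∉ K, x j = 0 := by
      intro j hj; rw [hxdef]; simp only; rw [if_neg hj]
    have hdec : ∀ i ∈ K, ∀ w ∈ W i, w ≤ ⨆ j, max 0 (A i j + x j - 1) := by
      intro i hi w hw
      have hnn : (0 : ℝ) ≤ ⨆ j, max 0 (A i j + x j - 1) :=
        le_trans (le_max_left 0 (A i i + x i - 1))
          (le_ciSup (f := fun j => max 0 (A i j + x j - 1)) (Finite.bddAbove_range _) i)
      rw [hWdef] at hw
      rcases Set.mem_insert_iff.mp hw with rfl | ⟨len, P, hP0, hPmem, hPw⟩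
      · exact hnn
      · cases len with
        | zero => rw [← hPw, ww_zero]; exact hnn
        | succ m =>
          have hdecomp := ww_head B m P
          have hw' : walkWeight B m (fun t => P t.succ) ∈ W (P 1) :=
            hmemW (P 1) m (fun t => P t.succ) (congrArg P Fin.succ_zero_eq_one)
              (fun t => hPmem t.succ)
          have h1 : walkWeight B m (fun t => P t.succ) ≤ z (P 1) := by
            rw [hzdef]; exact le_csSup (hbdd _) hw'
          have hP1K : P 1 ∈ K := hPmem 1
          have h2 : w ≤ B i (P 1) + z (P 1) := by
            rw [← hPw, hdecomp, hP0]; linarith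
          have heqx : A i (P 1) + x (P 1) - 1 = B i (P 1) + z (P 1) := by
            rw [hxval_K _ hP1K]; simp only [hBdef]; ring
          calc w ≤ B i (P 1) + z (P 1) := h2
            _ = A i (P 1) + x (P 1) - 1 := heqx.symm
            _ ≤ max 0 (A i (P 1) + x (P 1) - 1) := le_max_right _ _
            _ ≤ ⨆ j, max 0 (A i j + x j - 1) :=
              le_ciSup (f := fun j => max 0 (A i j + x j - 1)) (Finite.bddAbove_range _) (P 1)
    refine ⟨x, ?_, ?_, ?_, ?_⟩
    · intro i
      rw [Set.mem_Icc]
      by_cases hi : i ∈ K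
      · rw [hxval_K i hi]
        exact ⟨by have := hz0 i; linarith, by have := hzlam i; linarith⟩
      · rw [hxval_N i hi]
        exact ⟨le_rfl, by linarith⟩
    · intro i
      rcases hmemKL i with hi | hi
      · have hsm : lukSMul lam x i = z i := by
          simp only [lukSMul]
          rw [hxval_K i hi, show lam + ((1 - lam) + z i) - 1 = z i by ring,
            max_eq_right (hz0 i)]
        rw [hsm]
        simp only [lukMulVec]
        refine le_antisymm (ciSup_le fun j => ?_) ?_
        · by_cases hj : j ∈ K
          · rw [hxval_K j hj]
            have h1 := hstep i hi j hj
            simp only [hBdef] at h1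
            exact max_le (hz0 i) (by linarith)
          · rw [hxval_N j hj]
            have := (hA i j).2
            exact max_le (hz0 i) (by have := hz0 i; linarith)
        · rw [hzdef]
          exact csSup_le (hne i) (hdec i hi)
      · have hiK := hnKL i hi
        have hsm : lukSMul lam x i = 0 := by
          simp only [lukSMul]
          rw [hxval_N i hiK, max_eq_left (by linarith)]
        rw [hsm]
        simp only [lukMulVec]
        refine le_antisymm (ciSup_le fun j => ?_)
          (le_trans (le_max_left 0 (A i i + x i - 1))
            (le_ciSup (f := fun j => max 0 (A i j + x j - 1)) (Finite.bddAbove_range _) i))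
        · by_cases hj : j ∈ K
          · rw [hxval_K j hj]
            have h1 := hintoL i hi j hj
            simp only [hBdef] at h1
            exact max_le le_rfl (by linarith)
          · rw [hxval_N j hj]
            have := (hA i j).2
            exact max_le le_rfl (by linarith)
    · intro i hi
      rw [hxval_K i hi]
      have := hz0 i
      linarith
    · intro i hi
      rw [hxval_N i (hnKL i hi)]
      linarith
end

section
/- Let A ∈ [0,1]^{n×n}, 0 < λ < 1, and let (K_1,L_1) and (K_2,L_2) be two secure partitions of {1,…,n} with respect to D(A^(λ)) such that L_1 ⊆ L_2 and L_1 ≠ L_2. Then there exists a node k ∈ L_2 ∖ L_1 (equivalently k ∈ K_1 ∖ K_2) which is a secure node of the weighted digraph D(A^(λ)_{K_1 K_1}). -/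
open Finset

noncomputable def nw {ι : Type*} (B : ι → ι → ℝ) (Q : ℕ → ι) (len : ℕ) : ℝ :=
  ∑ i ∈ Finset.range len, B (Q i) (Q (i+1))

lemma nw_congr {ι : Type*} {B : ι → ι → ℝ} {Q R : ℕ → ι} {len : ℕ}
    (h : ∀ i ≤ len, Q i = R i) : nw B Q len = nw B R len :=
  Finset.sum_congr rfl fun i hi => by
    rw [Finset.mem_range] at hi
    rw [h i (le_of_lt hi), h (i+1) hi]

lemma nw_add {ι : Type*} (B : ι → ι → ℝ) (Q : ℕ → ι) (a b : ℕ) :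
    nw B Q (a+b) = nw B Q a + nw B (fun i => Q (a+i)) b := by
  induction b with
  | zero => simp [nw]
  | succ b ih =>
    rw [Nat.add_succ]
    simp only [nw, Finset.sum_range_succ] at ih ⊢
    rw [ih]
    ring_nf

lemma walkWeight_eq_nw {ι : Type*} (B : ι → ι → ℝ) (len : ℕ) (Q : ℕ → ι) :
    walkWeight B len (fun t => Q t.val) = nw B Q len := by
  unfold walkWeight nw
  rw [← Fin.sum_univ_eq_sum_range (fun j => B (Q j) (Q (j+1))) len]
  exact Finset.sum_congr rfl fun t _ => by simp

lemma walkWeight_eq_nw' {ι : Type*} (B : ι → ι → ℝ) (len : ℕ) (P : Fin (len+1) → ι) :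
    walkWeight B len P
      = nw B (fun i => P ⟨min i len, Nat.lt_succ_of_le (Nat.min_le_right i len)⟩) len := by
  unfold walkWeight nw
  rw [← Fin.sum_univ_eq_sum_range
    (fun j => B (P ⟨min j len, Nat.lt_succ_of_le (Nat.min_le_right j len)⟩)
      (P ⟨min (j+1) len, Nat.lt_succ_of_le (Nat.min_le_right (j+1) len)⟩)) len]
  refine Finset.sum_congr rfl fun t _ => ?_
  congr 1
  · exact congrArg P (Fin.ext (by simp [Nat.min_eq_left (le_of_lt t.isLt)]))
  · exact congrArg P (Fin.ext (by simp [Nat.min_eq_left t.isLt]))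

lemma noPosCycle {n : ℕ} (B : Fin n → Fin n → ℝ) (lam : ℝ) (K1 L1 : Finset (Fin n))
    (hs1 : SecurePartition B lam K1 L1)
    (Q : ℕ → Fin n) (hQK : ∀ i, Q i ∈ K1) (len : ℕ) (hc : Q len = Q 0) :
    nw B Q len ≤ 0 := by
  by_contra hpos
  push_neg at hpos
  rcases Nat.eq_zero_or_pos len with h0 | hlen
  · simp [h0, nw] at hpos
  set w := nw B Q len with hw
  set R : ℕ → Fin n := fun i => Q (i % len) with hR
  have hRK : ∀ i, R i ∈ K1 := fun i => hQK _
  have hper : ∀ N : ℕ, nw B R (N * len) = N * w := by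
    intro N
    induction N with
    | zero => simp [nw]
    | succ N ih =>
      have : (N+1) * len = N * len + len := by ring
      rw [this, nw_add, ih]
      have : nw B (fun i => R (N * len + i)) len = w := by
        rw [hw]
        refine nw_congr fun i hi => ?_
        show Q ((N * len + i) % len) = Q i
        rw [Nat.add_comm (N * len) i, Nat.add_mul_mod_self_right]
        rcases Nat.lt_or_ge i len with h | h
        · rw [Nat.mod_eq_of_lt h]
        · have : i = len := le_antisymm hi h
          rw [this, Nat.mod_self, hc]
      rw [this]; push_cast; ring
  unfold SecurePartition at hs1
  by_cases hL1 : L1 = ∅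
  · rw [if_pos hL1] at hs1
    obtain ⟨N, hN⟩ := exists_nat_gt (lam / w)
    have h1 : nw B R (N * len) ≤ lam := by
      rw [← walkWeight_eq_nw]; exact hs1 _ _
    rw [hper] at h1
    have : lam < N * w := (div_lt_iff₀ hpos).mp hN
    linarith
  · rw [if_neg hL1] at hs1
    obtain ⟨l, hl⟩ := Finset.nonempty_of_ne_empty hL1
    set R' : ℕ → Fin n := fun i => if i = 0 then l else R (i - 1) with hR'
    obtain ⟨N, hN⟩ := exists_nat_gt ((0 - B l (R 0)) / w)
    have key : nw B R' (1 + N * len) = B l (R 0) + N * w := by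
      rw [nw_add]
      have e1 : nw B R' 1 = B l (R 0) := by simp [nw, hR']
      have e2 : nw B (fun i => R' (1 + i)) (N * len) = N * w := by
        rw [← hper N]
        refine nw_congr fun i _ => ?_
        show R' (1 + i) = R i
        simp only [hR', Nat.add_comm 1 i]
        simp
      rw [e1, e2]
    have h1 : nw B R' (1 + N * len) ≤ 0 := by
      rw [← walkWeight_eq_nw]
      refine hs1 _ _ ?_ ?_
      · simpa [hR'] using hl
      · intro t ht
        have htv : (t : ℕ) ≠ 0 := fun h => ht (Fin.ext h)
        show R' t.val ∈ K1
        simp only [hR', if_neg htv]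
        exact hRK _
    rw [key] at h1
    have : 0 - B l (R 0) < N * w := (div_lt_iff₀ hpos).mp hN
    linarith

lemma reduce {n : ℕ} (B : Fin n → Fin n → ℝ) (K1 : Finset (Fin n))
    (hcyc : ∀ (Q : ℕ → Fin n) (len : ℕ), (∀ i, Q i ∈ K1) → Q len = Q 0 → nw B Q len ≤ 0) :
    ∀ (len : ℕ) (Q : ℕ → Fin n), (∀ i, Q i ∈ K1) →
      ∃ len' ≤ n, ∃ Q' : ℕ → Fin n, Q' 0 = Q 0 ∧ (∀ i, Q' i ∈ K1) ∧
        nw B Q len ≤ nw B Q' len' := by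
  intro len
  induction len using Nat.strong_induction_on with
  | _ len IH =>
  intro Q hQ
  by_cases hle : len ≤ n
  · exact ⟨len, hle, Q, rfl, hQ, le_refl _⟩
  push_neg at hle
  have key : ∀ a b : ℕ, a < b → b ≤ n → Q a = Q b →
      ∃ len' ≤ n, ∃ Q' : ℕ → Fin n, Q' 0 = Q 0 ∧ (∀ i, Q' i ∈ K1) ∧
        nw B Q len ≤ nw B Q' len' := by
    intro a b hab hbn hQab
    set d := b - a with hd
    have hd1 : 1 ≤ d := by omega
    have hadb : a + d = b := by omega
    set r := len - b with hr
    have hlen1 : len = a + (d + r) := by omega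
    set S : ℕ → Fin n := fun i => Q (a + i) with hS
    have hcycS : nw B S d ≤ 0 := by
      refine hcyc S d (fun i => hQ _) ?_
      show Q (a + d) = Q (a + 0)
      rw [hadb, Nat.add_zero]
      exact hQab.symm
    set Q' : ℕ → Fin n := fun i => if i < a then Q i else Q (i + d) with hQ'
    have hQ'K : ∀ i, Q' i ∈ K1 := by
      intro i; simp only [hQ']; split <;> exact hQ _
    have hQ'0 : Q' 0 = Q 0 := by
      simp only [hQ']
      split
      · rfl
      · have ha0 : a = 0 := by omega
        rw [Nat.zero_add]
        have : d = b := by omega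
        rw [this, ← hQab, ha0]
    have hsplit : nw B Q len = nw B Q' (a + r) + nw B S d := by
      rw [hlen1, nw_add, nw_add, nw_add]
      have e1 : nw B Q' a = nw B Q a := by
        refine nw_congr fun i hi => ?_
        simp only [hQ']
        rcases Nat.lt_or_ge i a with h | h
        · rw [if_pos h]
        · have : i = a := by omega
          rw [this, if_neg (lt_irrefl a), hadb, hQab]
      have e2 : nw B (fun i => Q' (a + i)) r = nw B (fun i => Q (a + (d + i))) r := by
        refine nw_congr fun i _ => ?_
        simp only [hQ', if_neg (by omega : ¬ a + i < a)]
        congr 1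
        omega
      rw [e1, e2]
      simp only [hS]
      ring
    have hlt : a + r < len := by omega
    obtain ⟨len', hlen', Q'', hQ''0, hQ''K, hle2⟩ := IH (a + r) hlt Q' hQ'K
    refine ⟨len', hlen', Q'', by rw [hQ''0, hQ'0], hQ''K, ?_⟩
    have : nw B Q len ≤ nw B Q' (a + r) := by rw [hsplit]; linarith
    linarith
  have hcard : Fintype.card (Fin n) < Fintype.card (Fin (n+1)) := by simp
  obtain ⟨x, y, hxy, hfq⟩ :=
    Fintype.exists_ne_map_eq_of_card_lt (fun t : Fin (n+1) => Q t.val) hcard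
  have hvne : x.val ≠ y.val := fun h => hxy (Fin.ext h)
  rcases hvne.lt_or_gt with h | h
  · exact key x.val y.val h (by omega) hfq
  · exact key y.val x.val h (by omega) hfq.symm

/-- if `(K₁,L₁)` and `(K₂,L₂)` are secure partitions w.r.t. `D(A^{(λ)})` with
`L₁ ⊊ L₂`, then some node `k ∈ L₂ ∖ L₁ = K₁ ∖ K₂` is a secure node of `D(A^{(λ)}_{K₁K₁})`. -/
theorem stmt14 {n : ℕ} (A : Fin n → Fin n → ℝ) (hA : ∀ i j, A i j ∈ Set.Icc (0 : ℝ) 1)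
    (lam : ℝ) (hlam0 : 0 < lam) (hlam1 : lam < 1)
    (K1 L1 K2 L2 : Finset (Fin n))
    (h1d : Disjoint K1 L1) (h1c : K1 ∪ L1 = Finset.univ)
    (h2d : Disjoint K2 L2) (h2c : K2 ∪ L2 = Finset.univ)
    (hs1 : SecurePartition (fun i j => A i j - lam) lam K1 L1)
    (hs2 : SecurePartition (fun i j => A i j - lam) lam K2 L2)
    (hsub : L1 ⊆ L2) (hne : L1 ≠ L2) :
    ∃ (k : Fin n) (_ : k ∈ L2 \ L1) (hkK : k ∈ K1),
      SecureNode (fun i j : ↥K1 => A i.1 j.1 - lam) (⟨k, hkK⟩ : ↥K1) := by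
  classical
  by_contra hcon
  set B : Fin n → Fin n → ℝ := fun i j => A i j - lam with hB
  -- membership helpers
  have hK1mem : ∀ i : Fin n, i ∉ L1 → i ∈ K1 := by
    intro i hi
    have hu : i ∈ K1 ∪ L1 := by rw [h1c]; exact Finset.mem_univ i
    rcases Finset.mem_union.mp hu with h | h
    · exact h
    · exact absurd h hi
  have hK2mem : ∀ i : Fin n, i ∉ L2 → i ∈ K2 := by
    intro i hi
    have hu : i ∈ K2 ∪ L2 := by rw [h2c]; exact Finset.mem_univ i
    rcases Finset.mem_union.mp hu with h | h
    · exact h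
    · exact absurd h hi
  have hK1L1 : ∀ i ∈ K1, i ∉ L1 := fun i hi hl => Finset.disjoint_left.mp h1d hi hl
  have hdel : ∀ i : Fin n, i ∈ K1 → i ∉ K2 → i ∈ L2 \ L1 := by
    intro i h1 h2
    refine Finset.mem_sdiff.mpr ⟨?_, hK1L1 i h1⟩
    by_contra hn2
    exact h2 (hK2mem i hn2)
  have hdelK1 : ∀ i ∈ L2 \ L1, i ∈ K1 := fun i hi =>
    hK1mem i (Finset.mem_sdiff.mp hi).2
  -- every node of L2 \ L1 admits a positive walk inside K1
  have H0 : ∀ k ∈ L2 \ L1, ∃ (len : ℕ) (Q : ℕ → Fin n),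
      Q 0 = k ∧ (∀ i, Q i ∈ K1) ∧ 0 < nw B Q len := by
    intro k hk
    have hkK : k ∈ K1 := hdelK1 k hk
    have hns : ¬ SecureNode (fun i j : ↥K1 => A i.1 j.1 - lam) (⟨k, hkK⟩ : ↥K1) :=
      fun hsec => hcon ⟨k, hk, hkK, hsec⟩
    unfold SecureNode at hns
    push_neg at hns
    obtain ⟨len, P, hP0, hPw⟩ := hns
    refine ⟨len, fun i => (P ⟨min i len, Nat.lt_succ_of_le (Nat.min_le_right i len)⟩ : Fin n),
      ?_, fun i => (P _).2, ?_⟩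
    · show ((P ⟨min 0 len, Nat.lt_succ_of_le (Nat.min_le_right 0 len)⟩ : ↥K1) : Fin n) = k
      have h00 : (⟨min 0 len, Nat.lt_succ_of_le (Nat.min_le_right 0 len)⟩ : Fin (len+1)) = 0 :=
        Fin.ext (by simp)
      rw [h00, hP0]
    · have he := walkWeight_eq_nw' (fun i j : ↥K1 => A i.1 j.1 - lam) len P
      rw [he] at hPw
      have he2 : nw (fun i j : ↥K1 => A i.1 j.1 - lam)
          (fun i => P ⟨min i len, Nat.lt_succ_of_le (Nat.min_le_right i len)⟩) len
          = nw B (fun i =>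
            ((P ⟨min i len, Nat.lt_succ_of_le (Nat.min_le_right i len)⟩ : ↥K1) : Fin n)) len := by
        simp only [nw, hB]
      rw [he2] at hPw
      exact hPw
  -- pick k ∈ L2 \ L1
  obtain ⟨k, hkL2, hkL1⟩ := Finset.exists_of_ssubset (hsub.ssubset_of_ne hne)
  have hkdel : k ∈ L2 \ L1 := Finset.mem_sdiff.mpr ⟨hkL2, hkL1⟩
  have hL2ne : L2 ≠ ∅ := Finset.ne_empty_of_mem hkL2
  -- ℕ-walk version of security of (K2, L2)
  have hs2' : ∀ (len : ℕ) (Q : ℕ → Fin n), Q 0 ∈ L2 →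
      (∀ i, 1 ≤ i → i ≤ len → Q i ∈ K2) → nw B Q len ≤ 0 := by
    intro len Q h0 hmid
    unfold SecurePartition at hs2
    rw [if_neg hL2ne] at hs2
    have happ := hs2 len (fun t => Q t.val) (by simpa using h0)
      (fun t ht => hmid t.val (Nat.pos_of_ne_zero (fun h => ht (Fin.ext h)))
        (Nat.lt_succ_iff.mp t.isLt))
    rwa [walkWeight_eq_nw] at happ
  -- no positive cycle inside K1
  have hcyc : ∀ (Q : ℕ → Fin n) (len : ℕ), (∀ i, Q i ∈ K1) → Q len = Q 0 → nw B Q len ≤ 0 :=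
    fun Q len h hc => noPosCycle B lam K1 L1 hs1 Q h len hc
  -- the finite set of weights of short K1-walks from k
  set wt : (Fin (n+1) × (Fin (n+1) → Fin n)) → ℝ := fun p =>
    nw B (fun i => p.2 ⟨min i n, Nat.lt_succ_of_le (Nat.min_le_right i n)⟩) p.1.val with hwt
  set T : Finset ℝ :=
    ((Finset.univ : Finset (Fin (n+1) × (Fin (n+1) → Fin n))).filter
      (fun p => p.2 0 = k ∧ ∀ t, p.2 t ∈ K1)).image wt with hT
  have hTne : T.Nonempty := by
    refine ⟨wt (0, fun _ => k), Finset.mem_image.mpr ⟨(0, fun _ => k), ?_, rfl⟩⟩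
    exact Finset.mem_filter.mpr ⟨Finset.mem_univ _, rfl, fun t => hdelK1 k hkdel⟩
  set M : ℝ := T.max' hTne with hM
  -- every K1-walk from k has weight at most M
  have hub : ∀ (len : ℕ) (Q : ℕ → Fin n), Q 0 = k → (∀ i, Q i ∈ K1) →
      nw B Q len ≤ M := by
    intro len Q h0 hK
    obtain ⟨len', hlen', Q', hQ'0, hQ'K, hle⟩ := reduce B K1 hcyc len Q hK
    have hmemT : nw B Q' len' ∈ T := by
      refine Finset.mem_image.mpr
        ⟨(⟨len', Nat.lt_succ_of_le hlen'⟩, fun t => Q' t.val), ?_, ?_⟩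
      · refine Finset.mem_filter.mpr ⟨Finset.mem_univ _, ?_, fun t => hQ'K _⟩
        show Q' ((0 : Fin (n+1)) : ℕ) = k
        simp only [Fin.val_zero]
        rw [hQ'0, h0]
      · show nw B (fun i => Q' (min i n)) len' = nw B Q' len'
        exact nw_congr fun i hi => by rw [Nat.min_eq_left (le_trans hi hlen')]
    exact le_trans hle (Finset.le_max' T _ hmemT)
  -- M is attained
  have hatt : ∃ (m : ℕ), ∃ Q : ℕ → Fin n, Q 0 = k ∧ (∀ i, Q i ∈ K1) ∧ nw B Q m = M := by
    obtain ⟨p, hpF, hpw⟩ := Finset.mem_image.mp (Finset.max'_mem T hTne)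
    obtain ⟨-, hp0, hpK⟩ := Finset.mem_filter.mp hpF
    refine ⟨p.1.val, fun i => p.2 ⟨min i n, Nat.lt_succ_of_le (Nat.min_le_right i n)⟩,
      ?_, fun i => hpK _, hpw⟩
    have h00 : (⟨min 0 n, Nat.lt_succ_of_le (Nat.min_le_right 0 n)⟩ : Fin (n+1)) = 0 :=
      Fin.ext (by simp)
    show p.2 ⟨min 0 n, Nat.lt_succ_of_le (Nat.min_le_right 0 n)⟩ = k
    rw [h00]
    exact hp0
  -- M is positive
  have hMpos : 0 < M := by
    obtain ⟨lenp, Qp, hQp0, hQpK, hQppos⟩ := H0 k hkdel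
    exact lt_of_lt_of_le hQppos (hub lenp Qp hQp0 hQpK)
  -- minimal length attaining M
  set m := Nat.find hatt with hm
  obtain ⟨P, hP0, hPK, hPM⟩ := Nat.find_spec hatt
  have hmin : ∀ m' < m, ¬ ∃ Q : ℕ → Fin n, Q 0 = k ∧ (∀ i, Q i ∈ K1) ∧ nw B Q m' = M :=
    fun m' h => Nat.find_min hatt h
  by_cases hex : ∃ t, 0 < t ∧ t ≤ m ∧ P t ∈ L2 \ L1
  · -- there is a later visit to L2 \ L1
    obtain ⟨t1, ht1pos, ht1le, ht1mem⟩ := hex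
    set t0 := Nat.findGreatest (fun t => 0 < t ∧ P t ∈ L2 \ L1) m with ht0
    have ht0spec : 0 < t0 ∧ P t0 ∈ L2 \ L1 :=
      Nat.findGreatest_spec (P := fun t => 0 < t ∧ P t ∈ L2 \ L1) ht1le ⟨ht1pos, ht1mem⟩
    have ht0le : t0 ≤ m := Nat.findGreatest_le (P := fun t => 0 < t ∧ P t ∈ L2 \ L1) m
    have hgr : ∀ t, t0 < t → t ≤ m → P t ∉ L2 \ L1 := by
      intro t h1 h2 hmem
      rw [ht0] at h1
      exact Nat.findGreatest_is_greatest h1 h2 ⟨by omega, hmem⟩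
    by_cases hend : t0 = m
    · -- the walk ends in L2 \ L1 : extend by a positive walk, contradicting hub
      have he : P m ∈ L2 \ L1 := by rw [← hend]; exact ht0spec.2
      obtain ⟨r, R, hR0, hRK, hRpos⟩ := H0 (P m) he
      set Pc : ℕ → Fin n := fun i => if i ≤ m then P i else R (i - m) with hPc
      have hPcK : ∀ i, Pc i ∈ K1 := by
        intro i
        simp only [hPc]
        split
        · exact hPK _
        · exact hRK _
      have hsplit : nw B Pc (m + r) = nw B P m + nw B R r := by
        rw [nw_add]
        congr 1
        · exact nw_congr fun i hi => by simp only [hPc, if_pos hi]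
        · refine nw_congr fun i _ => ?_
          simp only [hPc]
          rcases Nat.eq_zero_or_pos i with h0i | h0i
          · subst h0i
            rw [Nat.add_zero, if_pos (le_refl m), ← hR0]
          · rw [if_neg (by omega)]
            congr 1
            omega
      have hPc0 : Pc 0 = k := by
        simp only [hPc, if_pos (Nat.zero_le m)]
        exact hP0
      have hle2 : nw B Pc (m + r) ≤ M := hub (m + r) Pc hPc0 hPcK
      rw [hsplit, hPM] at hle2
      linarith
    · -- interior visit: split the walk
      have ht0lt : t0 < m := lt_of_le_of_ne ht0le hend
      have hsplit : nw B P m = nw B P t0 + nw B (fun i => P (t0 + i)) (m - t0) := by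
        have hmm : m = t0 + (m - t0) := by omega
        calc nw B P m = nw B P (t0 + (m - t0)) := by rw [← hmm]
        _ = nw B P t0 + nw B (fun i => P (t0 + i)) (m - t0) := nw_add B P t0 (m - t0)
      have hw1 : nw B P t0 ≤ M := hub t0 P hP0 hPK
      have hw2 : nw B (fun i => P (t0 + i)) (m - t0) ≤ 0 := by
        refine hs2' (m - t0) (fun i => P (t0 + i)) ?_ ?_
        · show P (t0 + 0) ∈ L2
          rw [Nat.add_zero]
          exact (Finset.mem_sdiff.mp ht0spec.2).1
        · intro i h1i h2i
          by_contra hc2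
          exact hgr (t0 + i) (by omega) (by omega) (hdel _ (hPK _) hc2)
      have hw1eq : nw B P t0 = M := by rw [hPM] at hsplit; linarith
      exact hmin t0 ht0lt ⟨P, hP0, hPK, hw1eq⟩
  · -- no later visit: the entire walk contradicts security of (K2, L2)
    push_neg at hex
    have hP0L2 : P 0 ∈ L2 := by rw [hP0]; exact hkL2
    have hmid : ∀ i, 1 ≤ i → i ≤ m → P i ∈ K2 := by
      intro i h1 h2
      by_contra hc2
      exact hex i h1 h2 (hdel _ (hPK _) hc2)
    have := hs2' m P hP0L2 hmid
    rw [hPM] at this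
    linarith
end

section
/- Let A ∈ [0,1]^{n×n}, 0 < λ < 1, and let (K,L) be a secure partition of {1,…,n} with respect to D(A^(λ)) with K nonempty. Then: (1) there exists a node k ∈ K that is a secure node of D(A^(λ)_{KK}); (2) for k ∈ K, the partition (K ∖ {k}, L ∪ {k}) is secure with respect to D(A^(λ)) if and only if k is a secure node of D(A^(λ)_{KK}). -/
open Finset

section StmtAux

/-- Weight of the ℕ-indexed walk `f 0 → f 1 → ⋯ → f len`. -/
noncomputable def wN {ι : Type*} (B : ι → ι → ℝ) (f : ℕ → ι) (len : ℕ) : ℝ :=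
  ∑ t ∈ Finset.range len, B (f t) (f (t + 1))

lemma wN_eq_walkWeight {ι : Type*} (B : ι → ι → ℝ) (f : ℕ → ι) (len : ℕ) :
    wN B f len = walkWeight B len (fun t : Fin (len + 1) => f t) := by
  unfold wN walkWeight
  rw [← Fin.sum_univ_eq_sum_range (fun t => B (f t) (f (t + 1))) len]
  refine Finset.sum_congr rfl fun t _ => ?_
  simp [Fin.val_succ]

lemma walkWeight_eq_wN {ι : Type*} (B : ι → ι → ℝ) (len : ℕ) (P : Fin (len + 1) → ι) :
    walkWeight B len P
      = wN B (fun t => P ⟨min t len, Nat.lt_succ_of_le (min_le_right _ _)⟩) len := by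
  rw [wN_eq_walkWeight]
  unfold walkWeight
  refine Finset.sum_congr rfl fun t _ => ?_
  have ht := t.isLt
  congr 1
  · refine congrArg P (Fin.ext ?_)
    simp only [Fin.coe_castSucc]
    omega
  · refine congrArg P (Fin.ext ?_)
    simp only [Fin.val_succ]
    omega

lemma wN_concat {ι : Type*} (B : ι → ι → ℝ) (f g : ℕ → ι) (a b : ℕ) (h0 : g 0 = f a) :
    wN B (fun t => if t < a then f t else g (t - a)) (a + b)
      = wN B f a + wN B g b := by
  unfold wN
  rw [Finset.sum_range_add]
  congr 1
  · refine Finset.sum_congr rfl fun t ht => ?_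
    rw [Finset.mem_range] at ht
    show B (if t < a then f t else g (t - a)) (if t + 1 < a then f (t + 1) else g (t + 1 - a))
        = B (f t) (f (t + 1))
    have e1 : (if t < a then f t else g (t - a)) = f t := if_pos ht
    have e2 : (if t + 1 < a then f (t + 1) else g (t + 1 - a)) = f (t + 1) := by
      by_cases h : t + 1 < a
      · exact if_pos h
      · have hta : t + 1 = a := by omega
        rw [if_neg h, hta, Nat.sub_self, h0]
    rw [e1, e2]
  · refine Finset.sum_congr rfl fun t ht => ?_
    rw [Finset.mem_range] at ht
    show B (if a + t < a then f (a + t) else g (a + t - a))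
        (if a + t + 1 < a then f (a + t + 1) else g (a + t + 1 - a))
        = B (g t) (g (t + 1))
    have h1 : ¬ (a + t < a) := by omega
    have h2 : ¬ (a + t + 1 < a) := by omega
    rw [if_neg h1, if_neg h2]
    congr 1 <;> · congr 1; omega

lemma walkLe_aux {n : ℕ} (B : Fin n → Fin n → ℝ) (lam : ℝ) (K L : Finset (Fin n))
    (hB : ∀ i j, -lam ≤ B i j) (hs : SecurePartition B lam K L)
    (f : ℕ → Fin n) (len : ℕ) (hf : ∀ t ≤ len, f t ∈ K) :
    wN B f len ≤ lam := by
  by_cases hL : L = ∅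
  · rw [SecurePartition, if_pos hL] at hs
    rw [wN_eq_walkWeight]
    exact hs len _
  · rw [SecurePartition, if_neg hL] at hs
    obtain ⟨l, hl⟩ := Finset.nonempty_iff_ne_empty.mpr hL
    have key : wN B (fun t => if t = 0 then l else f (t - 1)) (len + 1) ≤ 0 := by
      rw [wN_eq_walkWeight]
      refine hs (len + 1) _ ?_ ?_
      · show (if ((0 : Fin (len + 2)) : ℕ) = 0 then l else f _) ∈ L
        simp [hl]
      · intro t ht
        have htv : (t : ℕ) ≠ 0 := fun h => ht (Fin.ext h)
        show (if (t : ℕ) = 0 then l else f ((t : ℕ) - 1)) ∈ K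
        rw [if_neg htv]
        have := t.isLt
        exact hf _ (by omega)
    have split : wN B (fun t => if t = 0 then l else f (t - 1)) (len + 1)
        = wN B f len + B l (f 0) := by
      unfold wN
      rw [Finset.sum_range_succ']
      congr 1
    rw [split] at key
    have := hB l (f 0)
    linarith

lemma cycleLe_aux {n : ℕ} (B : Fin n → Fin n → ℝ) (lam : ℝ) (K L : Finset (Fin n))
    (hB : ∀ i j, -lam ≤ B i j) (hs : SecurePartition B lam K L)
    (f : ℕ → Fin n) (len : ℕ) (hf : ∀ t ≤ len, f t ∈ K) (hc : f len = f 0) :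
    wN B f len ≤ 0 := by
  rcases Nat.eq_zero_or_pos len with h0 | hpos
  · subst h0; simp [wN]
  by_contra hcon
  push_neg at hcon
  have hrep : ∀ N : ℕ, wN B (fun t => f (t % len)) (N * len) = N * wN B f len := by
    intro N
    induction N with
    | zero => simp [wN]
    | succ N ih =>
      have hm : (N + 1) * len = N * len + len := by ring
      rw [hm]
      unfold wN at ih ⊢
      rw [Finset.sum_range_add, ih]
      have hsum : (∑ t ∈ Finset.range len, B (f ((N * len + t) % len)) (f ((N * len + t + 1) % len)))
          = wN B f len := by
        unfold wN
        refine Finset.sum_congr rfl fun t ht => ?_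
        rw [Finset.mem_range] at ht
        have e1 : (N * len + t) % len = t := by
          rw [Nat.add_comm, Nat.add_mul_mod_self_right, Nat.mod_eq_of_lt ht]
        have e2 : f ((N * len + t + 1) % len) = f (t + 1) := by
          have : N * len + t + 1 = N * len + (t + 1) := by omega
          rw [this, Nat.add_comm, Nat.add_mul_mod_self_right]
          rcases eq_or_lt_of_le (Nat.succ_le_of_lt ht) with h | h
          · rw [← h] at hc ⊢
            rw [Nat.mod_self]
            exact hc.symm
          · rw [Nat.mod_eq_of_lt h]
        rw [e1, e2]
      rw [hsum]
      unfold wN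
      push_cast
      ring
  have hle : ∀ N : ℕ, (N : ℝ) * wN B f len ≤ lam := by
    intro N
    rw [← hrep N]
    exact walkLe_aux B lam K L hB hs _ _ (fun t _ => hf _ (le_of_lt (Nat.mod_lt _ hpos)))
  obtain ⟨N, hN⟩ := exists_nat_gt (lam / wN B f len)
  rw [div_lt_iff₀ hcon] at hN
  linarith [hle N]

end StmtAux

/-- if `(K,L)` is a secure partition w.r.t. `D(A^{(λ)})` with `K` nonempty, then
(1) some node of `K` is a secure node of `D(A^{(λ)}_{KK})`, and (2) for `k ∈ K` the partition
`(K ∖ {k}, L ∪ {k})` is secure iff `k` is a secure node of `D(A^{(λ)}_{KK})`. -/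
theorem stmt15 {n : ℕ} (A : Fin n → Fin n → ℝ) (hA : ∀ i j, A i j ∈ Set.Icc (0 : ℝ) 1)
    (lam : ℝ) (hlam0 : 0 < lam) (hlam1 : lam < 1)
    (K L : Finset (Fin n)) (hdisj : Disjoint K L) (hcover : K ∪ L = Finset.univ)
    (hK : K.Nonempty)
    (hs : SecurePartition (fun i j => A i j - lam) lam K L) :
    (∃ k : ↥K, SecureNode (fun i j : ↥K => A i.1 j.1 - lam) k) ∧
      ∀ (k : Fin n) (hk : k ∈ K),
        (SecurePartition (fun i j => A i j - lam) lam (K.erase k) (insert k L) ↔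
          SecureNode (fun i j : ↥K => A i.1 j.1 - lam) (⟨k, hk⟩ : ↥K)) := by
  have hB : ∀ i j, -lam ≤ A i j - lam := fun i j => by linarith [(hA i j).1]
  -- convert an insecurity witness / walk in K to ℕ-form
  have part2 : ∀ (k : Fin n) (hk : k ∈ K),
      (SecurePartition (fun i j => A i j - lam) lam (K.erase k) (insert k L) ↔
        SecureNode (fun i j : ↥K => A i.1 j.1 - lam) (⟨k, hk⟩ : ↥K)) := by
    intro k hk
    constructor
    · intro hsp
      have key : ∀ (len : ℕ) (f : ℕ → Fin n), (∀ t ≤ len, f t ∈ K) → f 0 = k →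
          wN (fun i j => A i j - lam) f len ≤ 0 := by
        intro len f hfK hf0
        rw [SecurePartition, if_neg (Finset.insert_ne_empty k L)] at hsp
        set T := Nat.findGreatest (fun t => f t = k) len with hT
        have hTle : T ≤ len := Nat.findGreatest_le len
        have hTk : f T = k := by
          rw [hT]
          exact Nat.findGreatest_spec (P := fun t => f t = k) (Nat.zero_le len) hf0
        have hTmax : ∀ t, T < t → t ≤ len → f t ≠ k := by
          intro t h1 h2
          rw [hT] at h1
          exact Nat.findGreatest_is_greatest (P := fun t => f t = k) h1 h2
        have hlen : len = T + (len - T) := by omega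
        have hsplit : wN (fun i j => A i j - lam) f len
            = wN (fun i j => A i j - lam) f T
              + wN (fun i j => A i j - lam) (fun t => f (T + t)) (len - T) := by
          rw [hlen]
          unfold wN
          rw [Finset.sum_range_add]
          have hb : T + (len - T) - T = len - T := by omega
          rw [hb]
          rfl
        have hpre : wN (fun i j => A i j - lam) f T ≤ 0 := by
          refine cycleLe_aux _ lam K L hB hs f T (fun t ht => hfK t (le_trans ht hTle)) ?_
          rw [hTk, hf0]
        have hsuf : wN (fun i j => A i j - lam) (fun t => f (T + t)) (len - T) ≤ 0 := by
          rw [wN_eq_walkWeight]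
          refine hsp (len - T) _ ?_ ?_
          · show f (T + ((0 : Fin (len - T + 1)) : ℕ)) ∈ insert k L
            simp [hTk]
          · intro t ht
            have htv : (t : ℕ) ≠ 0 := fun h => ht (Fin.ext h)
            have hlt := t.isLt
            show f (T + (t : ℕ)) ∈ (K.erase k)
            refine Finset.mem_erase.mpr ⟨hTmax _ (by omega) (by omega), hfK _ (by omega)⟩
        rw [hsplit]
        linarith
      intro len Q hQ0
      have hconv : walkWeight (fun i j : ↥K => A i.1 j.1 - lam) len Q
          = walkWeight (fun i j => A i j - lam) len (fun t => ((Q t : ↥K) : Fin n)) := rfl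
      rw [hconv, walkWeight_eq_wN]
      refine key len _ (fun t _ => (Q _).2) ?_
      show ((Q ⟨min 0 len, _⟩ : ↥K) : Fin n) = k
      have h0 : (⟨min 0 len, Nat.lt_succ_of_le (min_le_right _ _)⟩ : Fin (len + 1)) = 0 := by
        ext; simp
      rw [h0, hQ0]
    · intro hsec
      rw [SecurePartition, if_neg (Finset.insert_ne_empty k L)]
      intro len P hP0 hPt
      rcases Finset.mem_insert.mp hP0 with h0 | h0
      · have hall : ∀ t, P t ∈ K := by
          intro t
          by_cases ht : t = 0
          · rw [ht, h0]; exact hk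
          · exact Finset.mem_of_mem_erase (hPt t ht)
        have hconv : walkWeight (fun i j => A i j - lam) len P
            = walkWeight (fun i j : ↥K => A i.1 j.1 - lam) len (fun t => ⟨P t, hall t⟩) := rfl
        rw [hconv]
        exact hsec len _ (Subtype.ext h0)
      · have hL : L ≠ ∅ := Finset.ne_empty_of_mem h0
        have hs' := hs
        rw [SecurePartition, if_neg hL] at hs'
        exact hs' len P h0 (fun t ht => Finset.mem_of_mem_erase (hPt t ht))
  refine ⟨?_, part2⟩
  by_contra hcon
  push_neg at hcon
  have hW : ∀ k : ↥K, ∃ (len : ℕ) (f : ℕ → Fin n),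
      f 0 = (k : Fin n) ∧ (∀ t ≤ len, f t ∈ K) ∧ 0 < wN (fun i j => A i j - lam) f len := by
    intro k
    have hk' := hcon k
    rw [SecureNode] at hk'
    push_neg at hk'
    obtain ⟨len, Q, hQ0, hQw⟩ := hk'
    refine ⟨len, fun t => ((Q ⟨min t len, Nat.lt_succ_of_le (min_le_right _ _)⟩ : ↥K) : Fin n),
      ?_, fun t _ => (Q _).2, ?_⟩
    · show ((Q ⟨min 0 len, _⟩ : ↥K) : Fin n) = (k : Fin n)
      have h0 : (⟨min 0 len, Nat.lt_succ_of_le (min_le_right _ _)⟩ : Fin (len + 1)) = 0 := by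
        ext; simp
      rw [h0, hQ0]
    · have hconv : walkWeight (fun i j : ↥K => A i.1 j.1 - lam) len Q
          = walkWeight (fun i j => A i j - lam) len (fun t => ((Q t : ↥K) : Fin n)) := rfl
      rw [hconv, walkWeight_eq_wN] at hQw
      exact hQw
  choose lenF fF h0F hKF hposF using hW
  haveI : Nonempty ↥K := ⟨⟨hK.choose, hK.choose_spec⟩⟩
  have hδpos : 0 < Finset.univ.inf' Finset.univ_nonempty
      (fun k : ↥K => wN (fun i j => A i j - lam) (fF k) (lenF k)) := by
    rw [Finset.lt_inf'_iff]
    exact fun k _ => hposF k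
  set δ := Finset.univ.inf' Finset.univ_nonempty
      (fun k : ↥K => wN (fun i j => A i j - lam) (fF k) (lenF k)) with hδ
  have hδle : ∀ k : ↥K, δ ≤ wN (fun i j => A i j - lam) (fF k) (lenF k) :=
    fun k => Finset.inf'_le _ (Finset.mem_univ k)
  have grow : ∀ m : ℕ, ∃ (len : ℕ) (f : ℕ → Fin n),
      (∀ t ≤ len, f t ∈ K) ∧ (m : ℝ) * δ ≤ wN (fun i j => A i j - lam) f len := by
    intro m
    induction m with
    | zero =>
      exact ⟨0, fun _ => hK.choose, fun _ _ => hK.choose_spec, by simp [wN]⟩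
    | succ m ih =>
      obtain ⟨len, f, hfK, hw⟩ := ih
      set e : ↥K := ⟨f len, hfK len le_rfl⟩ with he
      have h0 : fF e 0 = f len := h0F e
      refine ⟨len + lenF e, fun t => if t < len then f t else fF e (t - len), ?_, ?_⟩
      · intro t ht
        by_cases h : t < len
        · simp only [if_pos h]; exact hfK t (le_of_lt h)
        · simp only [if_neg h]; exact hKF e _ (by omega)
      · rw [wN_concat (fun i j => A i j - lam) f (fF e) len (lenF e) h0]
        have := hδle e
        push_cast
        linarith
  have hbound : ∀ m : ℕ, (m : ℝ) * δ ≤ lam := by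
    intro m
    obtain ⟨len, f, hfK, hw⟩ := grow m
    exact le_trans hw (walkLe_aux _ lam K L hB hs f len hfK)
  obtain ⟨m, hm⟩ := exists_nat_gt (lam / δ)
  rw [div_lt_iff₀ hδpos] at hm
  linarith [hbound m]
end

section
/- Let A ∈ [0,1]^{n×n} and 0 < λ < 1. The set of Łukasiewicz eigenvectors of A associated with λ has a greatest element z with respect to the componentwise order. Moreover, setting L = {i : z_i < 1 − λ} and K = {i : z_i ≥ 1 − λ}, the partition (K,L) is secure with respect to D(A^(λ)), and every secure partition (K',L') of {1,…,n} with respect to D(A^(λ)) satisfies L ⊆ L'. -/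
open Finset

namespace Stmt16Aux

/-- The eigenvector predicate from the statement. -/
def IsEig {n : ℕ} (A : Fin n → Fin n → ℝ) (lam : ℝ) (x : Fin n → ℝ) : Prop :=
  (∀ i, x i ∈ Set.Icc (0 : ℝ) 1) ∧ ∀ i, lukMulVec A x i = lukSMul lam x i

section walks

variable {ι : Type*}

lemma walkWeight_zero (B : ι → ι → ℝ) (P : Fin 1 → ι) : walkWeight B 0 P = 0 := by
  simp [walkWeight]

lemma walkWeight_succ (B : ι → ι → ℝ) (len : ℕ) (Q : Fin (len + 2) → ι) :
    walkWeight B (len + 1) Q = B (Q 0) (Q 1) + walkWeight B len (fun t => Q t.succ) := by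
  unfold walkWeight
  rw [Fin.sum_univ_succ]
  congr 1

lemma walkWeight_cons (B : ι → ι → ℝ) (len : ℕ) (i : ι) (P : Fin (len + 1) → ι) :
    walkWeight B (len + 1) (Fin.cases i P) = B i (P 0) + walkWeight B len P := by
  rw [walkWeight_succ]
  have h2 : B i ((Fin.cases i P : Fin (len+2) → ι) 1) = B i (P 0) :=
    congrArg (B i) (Fin.cases_succ 0)
  have h3 : (fun t : Fin (len+1) => (Fin.cases i P : Fin (len+2) → ι) t.succ) = P := by
    funext t; exact Fin.cases_succ t
  rw [h3]
  exact congrArg (· + walkWeight B len P) h2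

/-- Telescoping bound for walk weights. -/
lemma walkWeight_le_tele (B : ι → ι → ℝ) (φ : ι → ℝ) :
    ∀ (len : ℕ) (P : Fin (len + 1) → ι),
      (∀ t : Fin len, B (P t.castSucc) (P t.succ) ≤ φ (P t.castSucc) - φ (P t.succ)) →
      walkWeight B len P ≤ φ (P 0) - φ (P (Fin.last len)) := by
  intro len
  induction len with
  | zero => intro P _; simp [walkWeight_zero]
  | succ m ih =>
    intro P h
    rw [walkWeight_succ]
    have htail := ih (fun t => P t.succ) (by
      intro t
      have := h t.succ
      rwa [← Fin.succ_castSucc] at this)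
    have h0 := h 0
    simp only [Fin.castSucc_zero, Fin.succ_zero_eq_one] at h0
    have hl : (fun t : Fin (m+1) => P t.succ) (Fin.last m) = P (Fin.last (m+1)) := by
      show P (Fin.last m).succ = _
      rw [Fin.succ_last]
    have h00 : (fun t : Fin (m+1) => P t.succ) 0 = P 1 := by
      simp [Fin.succ_zero_eq_one]
    rw [Fin.succ_last, Fin.succ_zero_eq_one] at htail
    linarith

end walks
section luk

variable {n : ℕ} (hn : 0 < n) (A : Fin n → Fin n → ℝ) (lam : ℝ)

lemma luk_bdd (x : Fin n → ℝ) (i : Fin n) :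
    BddAbove (Set.range fun j => max 0 (A i j + x j - 1)) :=
  Set.Finite.bddAbove (Set.finite_range _)

lemma luk_le_ciSup (x : Fin n → ℝ) (i j : Fin n) :
    max 0 (A i j + x j - 1) ≤ lukMulVec A x i :=
  le_ciSup (luk_bdd A x i) j

include hn

lemma luk_nonneg (x : Fin n → ℝ) (i : Fin n) : 0 ≤ lukMulVec A x i := by
  have : Nonempty (Fin n) := Fin.pos_iff_nonempty.mp hn
  exact le_trans (le_max_left _ _) (luk_le_ciSup A x i (Classical.arbitrary _))

lemma luk_ciSup_le {x : Fin n → ℝ} {i : Fin n} {a : ℝ}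
    (h : ∀ j, max 0 (A i j + x j - 1) ≤ a) : lukMulVec A x i ≤ a := by
  have : Nonempty (Fin n) := Fin.pos_iff_nonempty.mp hn
  exact ciSup_le h

lemma luk_shift {x y : Fin n → ℝ} {ε : ℝ} (hε : 0 ≤ ε) (hxy : ∀ j, x j ≤ y j + ε) (i : Fin n) :
    lukMulVec A x i ≤ lukMulVec A y i + ε := by
  refine luk_ciSup_le hn A fun j => ?_
  have h1 : max 0 (A i j + x j - 1) ≤ max 0 (A i j + y j - 1) + ε := by
    apply max_le
    · have := le_max_left (0:ℝ) (A i j + y j - 1); linarith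
    · have := le_max_right (0:ℝ) (A i j + y j - 1); have := hxy j; linarith
  exact le_trans h1 (by have := luk_le_ciSup A y i j; linarith)

lemma luk_mono {x y : Fin n → ℝ} (hxy : ∀ j, x j ≤ y j) (i : Fin n) :
    lukMulVec A x i ≤ lukMulVec A y i := by
  have := luk_shift hn A (le_refl (0:ℝ)) (fun j => by simpa using hxy j) (i := i)
  simpa using this

omit hn in
lemma lukSMul_shift {x y : Fin n → ℝ} {ε : ℝ} (hε : 0 ≤ ε) (hxy : ∀ j, x j ≤ y j + ε)
    (i : Fin n) : lukSMul lam x i ≤ lukSMul lam y i + ε := by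
  unfold lukSMul
  apply max_le
  · have := le_max_left (0:ℝ) (lam + y i - 1); linarith
  · have := le_max_right (0:ℝ) (lam + y i - 1); have := hxy i; linarith

lemma isEig_zero (hA : ∀ i j, A i j ∈ Set.Icc (0 : ℝ) 1) (hlam1 : lam < 1) :
    IsEig A lam (fun _ => 0) := by
  have hne : Nonempty (Fin n) := Fin.pos_iff_nonempty.mp hn
  constructor
  · intro i; exact ⟨le_refl _, zero_le_one⟩
  · intro i
    have h1 : lukMulVec A (fun _ => 0) i = 0 := by
      apply le_antisymm
      · refine luk_ciSup_le hn A fun j => ?_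
        apply max_le (le_refl _)
        have := (hA i j).2; linarith
      · exact luk_nonneg hn A _ i
    have h2 : lukSMul lam (fun _ => (0:ℝ)) i = 0 := by
      unfold lukSMul
      apply max_eq_left
      show lam + 0 - 1 ≤ 0
      linarith
    rw [h1, h2]

lemma isEig_max {x y : Fin n → ℝ} (hx : IsEig A lam x) (hy : IsEig A lam y) :
    IsEig A lam (fun j => max (x j) (y j)) := by
  constructor
  · intro i
    exact ⟨le_max_of_le_left (hx.1 i).1, max_le (hx.1 i).2 (hy.1 i).2⟩
  · intro i
    have hmax : lukMulVec A (fun j => max (x j) (y j)) i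
        = max (lukMulVec A x i) (lukMulVec A y i) := by
      apply le_antisymm
      · refine luk_ciSup_le hn A fun j => ?_
        rcases le_total (x j) (y j) with h | h
        · have e : max (x j) (y j) = y j := max_eq_right h
          rw [e]
          exact le_trans (luk_le_ciSup A y i j) (le_max_right _ _)
        · have e : max (x j) (y j) = x j := max_eq_left h
          rw [e]
          exact le_trans (luk_le_ciSup A x i j) (le_max_left _ _)
      · exact max_le (luk_mono hn A (fun j => le_max_left _ _) i)
          (luk_mono hn A (fun j => le_max_right _ _) i)
    have hsm : lukSMul lam (fun j => max (x j) (y j)) i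
        = max (lukSMul lam x i) (lukSMul lam y i) := by
      unfold lukSMul
      have hb : (fun j => max (x j) (y j)) i = max (x i) (y i) := rfl
      rw [hb]
      rcases le_total (x i) (y i) with h | h
      · rw [max_eq_right h, max_eq_right (by apply max_le_max (le_refl _); linarith : 
          max 0 (lam + x i - 1) ≤ max 0 (lam + y i - 1))]
      · rw [max_eq_left h, max_eq_left (by apply max_le_max (le_refl _); linarith : 
          max 0 (lam + y i - 1) ≤ max 0 (lam + x i - 1))]
    rw [hmax, hsm, hx.2 i, hy.2 i]

lemma isEig_sup' (s : Finset (Fin n)) (hs : s.Nonempty) (f : Fin n → Fin n → ℝ)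
    (hf : ∀ a ∈ s, IsEig A lam (f a)) :
    IsEig A lam (fun j => s.sup' hs (fun a => f a j)) := by
  revert hf
  induction hs using Finset.Nonempty.cons_induction with
  | singleton a =>
      intro hf
      simp only [Finset.sup'_singleton]
      exact hf a (Finset.mem_singleton_self a)
  | cons a s h hs ih =>
      intro hf
      have hrw : (fun j => (Finset.cons a s h).sup' (Finset.cons_nonempty h) (fun b => f b j))
          = fun j => max (f a j) (s.sup' hs (fun b => f b j)) := by
        funext j; exact Finset.sup'_cons hs _
      rw [hrw]
      have h1 := ih (fun b hb => hf b (Finset.mem_cons_of_mem hb))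
      have h2 := hf a (Finset.mem_cons_self a s)
      exact isEig_max hn A lam h2 h1
end luk
section greatest

variable {n : ℕ}

lemma exists_greatest (hn : 0 < n) (A : Fin n → Fin n → ℝ)
    (hA : ∀ i j, A i j ∈ Set.Icc (0 : ℝ) 1) (lam : ℝ) (hlam1 : lam < 1) :
    ∃ z : Fin n → ℝ, IsEig A lam z ∧ ∀ x, IsEig A lam x → ∀ i, x i ≤ z i := by
  have hne : Nonempty (Fin n) := Fin.pos_iff_nonempty.mp hn
  set S : Fin n → Set ℝ := fun i => {t | ∃ x, IsEig A lam x ∧ x i = t} with hS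
  have hSne : ∀ i, (S i).Nonempty := fun i =>
    ⟨0, ⟨fun _ => 0, isEig_zero hn A lam hA hlam1, rfl⟩⟩
  have hSbdd : ∀ i, BddAbove (S i) := by
    intro i
    refine ⟨1, ?_⟩
    rintro t ⟨x, hx, rfl⟩
    exact (hx.1 i).2
  set z : Fin n → ℝ := fun i => sSup (S i) with hz
  have hle : ∀ x, IsEig A lam x → ∀ i, x i ≤ z i := fun x hx i =>
    le_csSup (hSbdd i) ⟨x, hx, rfl⟩
  have key : ∀ ε : ℝ, 0 < ε → ∃ y, IsEig A lam y ∧ (∀ j, z j ≤ y j + ε) ∧ (∀ j, y j ≤ z j) := by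
    intro ε hε
    have : ∀ i : Fin n, ∃ x, IsEig A lam x ∧ z i - ε < x i := by
      intro i
      obtain ⟨t, ⟨x, hx, rfl⟩, ht⟩ := exists_lt_of_lt_csSup (hSne i) (by linarith : z i - ε < z i)
      exact ⟨x, hx, ht⟩
    choose g hg1 hg2 using this
    have huniv : (Finset.univ : Finset (Fin n)).Nonempty := Finset.univ_nonempty
    refine ⟨fun j => Finset.univ.sup' huniv (fun a => g a j),
      isEig_sup' hn A lam Finset.univ huniv g (fun a _ => hg1 a), ?_, ?_⟩
    · intro j
      have h1 : g j j ≤ Finset.univ.sup' huniv (fun a => g a j) :=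
        Finset.le_sup' (fun a => g a j) (Finset.mem_univ j)
      have := hg2 j
      linarith
    · intro j
      exact Finset.sup'_le _ _ (fun a _ => hle (g a) (hg1 a) j)
  have hIcc : ∀ i, z i ∈ Set.Icc (0:ℝ) 1 := by
    intro i
    constructor
    · have := hle (fun _ => 0) (isEig_zero hn A lam hA hlam1) i; simpa using this
    · refine csSup_le (hSne i) ?_
      rintro t ⟨x, hx, rfl⟩
      exact (hx.1 i).2
  refine ⟨z, ⟨hIcc, ?_⟩, hle⟩
  intro i
  apply le_antisymm
  · refine le_of_forall_pos_le_add ?_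
    intro ε hε
    obtain ⟨y, hy, h1, h2⟩ := key ε hε
    calc lukMulVec A z i ≤ lukMulVec A y i + ε := luk_shift hn A (le_of_lt hε) h1 i
      _ = lukSMul lam y i + ε := by rw [hy.2 i]
      _ ≤ lukSMul lam z i + ε := by
          have := lukSMul_shift lam (le_refl (0:ℝ)) (fun j => by simpa using h2 j) i
          simpa using this
  · refine le_of_forall_pos_le_add ?_
    intro ε hε
    obtain ⟨y, hy, h1, h2⟩ := key ε hε
    calc lukSMul lam z i ≤ lukSMul lam y i + ε := lukSMul_shift lam (le_of_lt hε) h1 i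
      _ = lukMulVec A y i + ε := by rw [hy.2 i]
      _ ≤ lukMulVec A z i + ε := by
          have := luk_mono hn A h2 i
          linarith

end greatest
section secure

variable {n : ℕ}

lemma secure_of_eig (hn : 0 < n) (A : Fin n → Fin n → ℝ)
    (hA : ∀ i j, A i j ∈ Set.Icc (0 : ℝ) 1) (lam : ℝ) (hlam1 : lam < 1)
    (z : Fin n → ℝ) (hz : IsEig A lam z) :
    SecurePartition (fun i j => A i j - lam) lam
      (Finset.univ.filter fun i => 1 - lam ≤ z i)
      (Finset.univ.filter fun i => z i < 1 - lam) := by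
  have hbase : ∀ i j, A i j + z j - 1 ≤ lukSMul lam z i := by
    intro i j
    calc A i j + z j - 1 ≤ max 0 (A i j + z j - 1) := le_max_right _ _
      _ ≤ lukMulVec A z i := luk_le_ciSup A z i j
      _ = lukSMul lam z i := hz.2 i
  have hK : ∀ i j, 1 - lam ≤ z i → A i j - lam ≤ z i - z j := by
    intro i j hi
    have h1 := hbase i j
    have h2 : lukSMul lam z i = lam + z i - 1 := max_eq_right (by linarith)
    rw [h2] at h1; linarith
  have hLb : ∀ i j, z i < 1 - lam → A i j - lam ≤ (1 - lam) - z j := by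
    intro i j hi
    have h1 := hbase i j
    have h2 : lukSMul lam z i = 0 := max_eq_left (by linarith)
    rw [h2] at h1; linarith
  rw [SecurePartition]
  split_ifs with hLe
  · -- L empty : all nodes have z i ≥ 1 - lam
    have hall : ∀ i, 1 - lam ≤ z i := by
      intro i
      have := Finset.filter_eq_empty_iff.mp hLe (Finset.mem_univ i)
      linarith [not_lt.mp this]
    intro len P
    have := walkWeight_le_tele (fun i j => A i j - lam) z len P
      (fun t => hK _ _ (hall _))
    have h1 := (hz.1 (P 0)).2
    have h2 := hall (P (Fin.last len))
    linarith
  · intro len P hP0 ht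
    have hP0' : z (P 0) < 1 - lam := (Finset.mem_filter.mp hP0).2
    have ht' : ∀ t : Fin (len + 1), t ≠ 0 → 1 - lam ≤ z (P t) :=
      fun t h => (Finset.mem_filter.mp (ht t h)).2
    match len, P, ht' with
    | 0, P, ht' => simp [walkWeight_zero]
    | (m+1), P, ht' =>
      rw [walkWeight_succ]
      have htail := walkWeight_le_tele (fun i j => A i j - lam) z m (fun t => P t.succ)
        (fun t => hK _ _ (ht' _ (Fin.succ_ne_zero _)))
      have h00 : (fun t : Fin (m+1) => P t.succ) 0 = P 1 := by
        simp [Fin.succ_zero_eq_one]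
      have hl : (fun t : Fin (m+1) => P t.succ) (Fin.last m) = P (Fin.last (m+1)) := by
        show P (Fin.last m).succ = _
        rw [Fin.succ_last]
      rw [Fin.succ_zero_eq_one, Fin.succ_last] at htail
      have h1 : A (P 0) (P 1) - lam ≤ (1 - lam) - z (P 1) := hLb _ _ hP0'
      have h2 : 1 - lam ≤ z (P (Fin.last (m+1))) :=
        ht' (Fin.last (m+1)) (Fin.last_pos).ne'
      linarith

end secure
section fromsecure

variable {n : ℕ}

lemma eig_of_secure (hn : 0 < n) (A : Fin n → Fin n → ℝ)
    (hA : ∀ i j, A i j ∈ Set.Icc (0 : ℝ) 1) (lam : ℝ) (hlam0 : 0 < lam) (hlam1 : lam < 1)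
    (K' L' : Finset (Fin n)) (huniv : K' ∪ L' = Finset.univ)
    (hsec : SecurePartition (fun i j => A i j - lam) lam K' L') :
    ∃ x, IsEig A lam x ∧ ∀ i ∈ K', 1 - lam ≤ x i := by
  classical
  have hne : Nonempty (Fin n) := Fin.pos_iff_nonempty.mp hn
  set B : Fin n → Fin n → ℝ := fun i j => A i j - lam with hB
  set W : Fin n → Set ℝ := fun j =>
    {w | ∃ (len : ℕ) (P : Fin (len + 1) → Fin n),
      P 0 = j ∧ (∀ t, P t ∈ K') ∧ walkWeight B len P = w} with hWdef
  have hW0 : ∀ j ∈ K', (0:ℝ) ∈ W j :=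
    fun j hj => ⟨0, fun _ => j, rfl, fun _ => hj, walkWeight_zero B _⟩
  -- every weight of a walk inside K' is at most lam
  have hWle : ∀ j, ∀ w ∈ W j, w ≤ lam := by
    rintro j w ⟨len, P, hP0, hPK, rfl⟩
    by_cases hL : L' = ∅
    · rw [SecurePartition, if_pos hL] at hsec
      exact hsec len P
    · rw [SecurePartition, if_neg hL] at hsec
      obtain ⟨i₀, hi₀⟩ := Finset.nonempty_iff_ne_empty.mpr hL
      have hw : walkWeight B (len + 1) (Fin.cases i₀ P) ≤ 0 := by
        refine hsec (len + 1) (Fin.cases i₀ P) (by simpa using hi₀) ?_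
        intro t ht
        rcases Fin.eq_zero_or_eq_succ t with rfl | ⟨s, rfl⟩
        · exact absurd rfl ht
        · simpa using hPK s
      rw [walkWeight_cons] at hw
      have hA0 := (hA i₀ (P 0)).1
      have : B i₀ (P 0) = A i₀ (P 0) - lam := rfl
      linarith
  have hWbdd : ∀ j, BddAbove (W j) := fun j => ⟨lam, fun w hw => hWle j w hw⟩
  set u : Fin n → ℝ := fun j => sSup (W j) with hu
  have hu0 : ∀ j ∈ K', 0 ≤ u j := fun j hj => le_csSup (hWbdd j) (hW0 j hj)
  have hulam : ∀ j ∈ K', u j ≤ lam :=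
    fun j hj => csSup_le ⟨0, hW0 j hj⟩ (hWle j)
  -- prefixing a walk by one edge
  have hpre : ∀ (i j : Fin n) (w : ℝ), w ∈ W j →
      ∃ (len : ℕ) (P : Fin (len + 1) → Fin n), P 0 = i ∧ (∀ t, t ≠ 0 → P t ∈ K') ∧
        walkWeight B len P = B i j + w ∧ (i ∈ K' → B i j + w ∈ W i) := by
    rintro i j w ⟨len, P, hP0, hPK, rfl⟩
    refine ⟨len + 1, Fin.cases i P, by simp, ?_, ?_, ?_⟩
    · intro t ht
      rcases Fin.eq_zero_or_eq_succ t with rfl | ⟨s, rfl⟩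
      · exact absurd rfl ht
      · simpa using hPK s
    · rw [walkWeight_cons, hP0]
    · intro hi
      refine ⟨len + 1, Fin.cases i P, by simp, ?_, ?_⟩
      · intro t
        rcases Fin.eq_zero_or_eq_succ t with rfl | ⟨s, rfl⟩
        · simpa using hi
        · simpa using hPK s
      · rw [walkWeight_cons, hP0]
  -- Bellman inequality inside K'
  have hBu : ∀ i ∈ K', ∀ j ∈ K', B i j + u j ≤ u i := by
    intro i hi j hj
    have h1 : ∀ w ∈ W j, w ≤ u i - B i j := by
      intro w hw
      obtain ⟨len, P, _, _, _, hmem⟩ := hpre i j w hw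
      have := le_csSup (hWbdd i) (hmem hi)
      linarith
    have := csSup_le ⟨0, hW0 j hj⟩ h1
    linarith
  -- edges from L' into K' are blocked
  have hBL : ∀ i ∈ L', ∀ j ∈ K', B i j + u j ≤ 0 := by
    intro i hi j hj
    have hLne : L' ≠ ∅ := Finset.ne_empty_of_mem hi
    rw [SecurePartition, if_neg hLne] at hsec
    have h1 : ∀ w ∈ W j, w ≤ -B i j := by
      intro w hw
      obtain ⟨len, P, hP0, hPK, hww, _⟩ := hpre i j w hw
      have := hsec len P (hP0 ▸ hi) hPK
      rw [hww] at this
      linarith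
    have := csSup_le ⟨0, hW0 j hj⟩ h1
    linarith
  set x : Fin n → ℝ := fun j => if j ∈ K' then 1 - lam + u j else 0 with hx
  have hxK : ∀ j ∈ K', x j = 1 - lam + u j := fun j hj => if_pos hj
  have hxL : ∀ j, j ∉ K' → x j = 0 := fun j hj => if_neg hj
  have hmemL : ∀ i, i ∉ K' → i ∈ L' := by
    intro i hi
    have : i ∈ K' ∪ L' := huniv ▸ Finset.mem_univ i
    exact (Finset.mem_union.mp this).resolve_left hi
  refine ⟨x, ⟨?_, ?_⟩, ?_⟩
  · intro i
    by_cases hi : i ∈ K'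
    · rw [hxK i hi]
      have := hu0 i hi; have := hulam i hi
      constructor <;> linarith
    · rw [hxL i hi]
      exact ⟨le_refl _, zero_le_one⟩
  · intro i
    by_cases hi : i ∈ K'
    · -- RHS = u i
      have hrhs : lukSMul lam x i = u i := by
        rw [lukSMul, hxK i hi]
        have := hu0 i hi
        rw [show lam + (1 - lam + u i) - 1 = u i by ring]
        exact max_eq_right this
      rw [hrhs]
      apply le_antisymm
      · refine luk_ciSup_le hn A fun j => ?_
        refine max_le (hu0 i hi) ?_
        by_cases hj : j ∈ K'
        · rw [hxK j hj]
          have := hBu i hi j hj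
          have : B i j + u j ≤ u i := this
          have hBij : B i j = A i j - lam := rfl
          linarith
        · rw [hxL j hj]
          have := (hA i j).2
          have := hu0 i hi
          linarith
      · refine csSup_le ⟨0, hW0 i hi⟩ ?_
        rintro w ⟨len, P, hP0, hPK, rfl⟩
        match len, P, hP0, hPK with
        | 0, P, hP0, hPK =>
          rw [walkWeight_zero]
          exact luk_nonneg hn A x i
        | (m+1), P, hP0, hPK =>
          rw [walkWeight_succ, hP0]
          have hP1 : P 1 ∈ K' := hPK 1
          have htail : walkWeight B m (fun t => P t.succ) ≤ u (P 1) := by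
            refine le_csSup (hWbdd (P 1)) ?_
            exact ⟨m, fun t => P t.succ, by simp [Fin.succ_zero_eq_one], fun t => hPK t.succ, rfl⟩
          have hterm : A i (P 1) + x (P 1) - 1 ≤ lukMulVec A x i :=
            le_trans (le_max_right _ _) (luk_le_ciSup A x i (P 1))
          rw [hxK (P 1) hP1] at hterm
          have hBi : B i (P 1) = A i (P 1) - lam := rfl
          linarith
    · have hiL : i ∈ L' := hmemL i hi
      have hrhs : lukSMul lam x i = 0 := by
        rw [lukSMul, hxL i hi]
        exact max_eq_left (by linarith)
      rw [hrhs]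
      apply le_antisymm
      · refine luk_ciSup_le hn A fun j => ?_
        refine max_le (le_refl _) ?_
        by_cases hj : j ∈ K'
        · rw [hxK j hj]
          have := hBL i hiL j hj
          have hBij : B i j = A i j - lam := rfl
          linarith
        · rw [hxL j hj]
          have := (hA i j).2
          linarith
      · exact luk_nonneg hn A x i
  · intro i hi
    rw [hxK i hi]
    have := hu0 i hi
    linarith

end fromsecure

end Stmt16Aux

/-- the set of Łukasiewicz eigenvectors associated with `λ ∈ (0,1)` has a greatest
element `z`; the partition `K = {i : z_i ≥ 1-λ}`, `L = {i : z_i < 1-λ}` is secure w.r.t.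
`D(A^{(λ)})`, and every secure partition `(K',L')` satisfies `L ⊆ L'`. -/
theorem stmt16 {n : ℕ} (hn : 0 < n) (A : Fin n → Fin n → ℝ)
    (hA : ∀ i j, A i j ∈ Set.Icc (0 : ℝ) 1)
    (lam : ℝ) (hlam0 : 0 < lam) (hlam1 : lam < 1) :
    ∃ z : Fin n → ℝ,
      ((∀ i, z i ∈ Set.Icc (0 : ℝ) 1) ∧ ∀ i, lukMulVec A z i = lukSMul lam z i) ∧
      (∀ x : Fin n → ℝ,
        ((∀ i, x i ∈ Set.Icc (0 : ℝ) 1) ∧ ∀ i, lukMulVec A x i = lukSMul lam x i) → x ≤ z) ∧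
      SecurePartition (fun i j => A i j - lam) lam
        (Finset.univ.filter fun i => 1 - lam ≤ z i)
        (Finset.univ.filter fun i => z i < 1 - lam) ∧
      ∀ K' L' : Finset (Fin n), Disjoint K' L' → K' ∪ L' = Finset.univ →
        SecurePartition (fun i j => A i j - lam) lam K' L' →
        (Finset.univ.filter fun i => z i < 1 - lam) ⊆ L' := by
  obtain ⟨z, hz, hgreat⟩ := Stmt16Aux.exists_greatest hn A hA lam hlam1
  refine ⟨z, hz, fun x hx => fun i => hgreat x hx i,
    Stmt16Aux.secure_of_eig hn A hA lam hlam1 z hz, ?_⟩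
  intro K' L' hdisj huniv hsec
  intro i hi
  have hiz : z i < 1 - lam := (Finset.mem_filter.mp hi).2
  by_contra hiL
  have hiK : i ∈ K' := by
    have : i ∈ K' ∪ L' := huniv ▸ Finset.mem_univ i
    exact (Finset.mem_union.mp this).resolve_right hiL
  obtain ⟨x, hxE, hxK⟩ :=
    Stmt16Aux.eig_of_secure hn A hA lam hlam0 hlam1 K' L' huniv hsec
  have h1 : 1 - lam ≤ x i := hxK i hiK
  have h2 : x i ≤ z i := hgreat x hxE i
  linarith
end
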